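/- For every ω ∈ 𝒯, λ, h ≥ 0, b > 0 and every μ ∈ 𝒫 with Σ_x x μ(x) < ∞ and I(μ) < ∞, one has Q(μ) = b Σ_x x μ(x) + log Z(b,λ,h) − H̃(μ | μ_b^{λ,h}). -/

import Mathlib

open Filter Topology
open scoped BigOperators ENNReal

noncomputable section
namespace Copoly

/-- The number of elements of a finite type satisfying a predicate. -/
def cardOf {α : Type*} [Fintype α] (P : α → Prop) : ℕ :=
  (@Finset.filter _ P (Classical.decPred P) Finset.univ).card

/-- A single step of the simple random walk. -/
def step (b : Bool) : ℤ := if b then 1 else -1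

/-- The simple random walk path built from the increments `y`. -/
def walk (y : ℕ → Bool) (x : ℕ) : ℤ := ∑ i ∈ Finset.range x, step (y i)

/-- `sign (S x)`, with the convention `sign (S x) = sign (S (x-1))` when `S x = 0`. -/
def wsign (y : ℕ → Bool) : ℕ → ℤ
  | 0 => 1
  | x + 1 => if walk y (x + 1) = 0 then wsign y x else Int.sign (walk y (x + 1))

/-- Extension of a finite tuple of increments by `false`. -/
def ext {N : ℕ} (y : Fin N → Bool) : ℕ → Bool :=
  fun i => if h : i < N then y ⟨i, h⟩ else false

/-- The partition function `Z_{N,ω,λ,h} = E[exp (λ ∑_{x=1}^N (ω_x + h) sign (S_x))]`,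
written as the exact average over the `2^N` equally likely increment strings. -/
def Zpart (ω : ℕ → ℤ) (lam h : ℝ) (N : ℕ) : ℝ :=
  (1 / 2 : ℝ) ^ N * ∑ y : Fin N → Bool,
    Real.exp (lam * ∑ x ∈ Finset.Icc 1 N, ((ω x : ℝ) + h) * (wsign (ext y) x : ℝ))

/-- `ω` is centered and `2T`-periodic with `T ≥ 1`. -/
def IsPeriod (ω : ℕ → ℤ) (T : ℕ) : Prop :=
  0 < T ∧ (∀ x, ω (x + 2 * T) = ω x) ∧ ∑ x ∈ Finset.Icc 1 (2 * T), ω x = 0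

/-- The class `𝒯` of nontrivial centered periodic sequences with values in `{-1,1}`. -/
def memT (ω : ℕ → ℤ) : Prop :=
  (∀ x, ω x = 1 ∨ ω x = -1) ∧ (∃ T, IsPeriod ω T) ∧
    ¬ (∀ k : ℕ, 1 ≤ k → ω (2 * k - 1) * ω (2 * k) = -1)

/-- `T_ω`, the smallest (half-)period of `ω`. -/
def Tper (ω : ℕ → ℤ) : ℕ := sInf {T | IsPeriod ω T}

/-- The free energy `f_ω(λ,h)` (the limit defining it exists). -/
def freeEnergy (ω : ℕ → ℤ) (lam h : ℝ) : ℝ :=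
  limUnder atTop fun N : ℕ => Real.log (Zpart ω lam h N) / N

/-- `φ_ω(λ,h) = f_ω(λ,h) - λ h`. -/
def phiFE (ω : ℕ → ℤ) (lam h : ℝ) : ℝ := freeEnergy ω lam h - lam * h

/-- `ξ_{α,β} = ∑_{x=2a+1}^{2b} ω_x` for representatives `a ∈ α`, `b ∈ β` with `a < b`. -/
def xiM (T : ℕ) (ω : ℕ → ℤ) (α β : ZMod T) : ℤ :=
  ∑ x ∈ Finset.Icc (2 * α.val + 1)
      (2 * (if α.val < β.val then β.val else β.val + T)), ω x

/-- `K(x) = P(η = x)`, the law of the first return time to `0` of the walk. -/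
def Kret (x : ℕ) : ℝ :=
  if x = 0 then 0 else
    (1 / 2 : ℝ) ^ x * (cardOf fun y : Fin x → Bool =>
      walk (ext y) x = 0 ∧ ∀ z, 0 < z → z < x → walk (ext y) z ≠ 0 : ℕ)

/-- `p_{α,β} = P(η/2 ∈ β - α)`. -/
def pmat (T : ℕ) (α β : ZMod T) : ℝ :=
  ∑' n : ℕ, if (n : ZMod T) = β - α then Kret (2 * n) else 0

/-- `K_{α,β}(x) = P(η = x | η/2 ∈ β - α)`. -/
def Kcond (T : ℕ) (α β : ZMod T) (x : ℕ) : ℝ :=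
  if x % 2 = 0 ∧ ((x / 2 : ℕ) : ZMod T) = β - α then Kret x / pmat T α β else 0

/-- `Φ^{λ,h}_{α,β}(x) = log ((1 + exp (-2(λ ξ_{α,β} + λ h x)))/2)`. -/
def PhiM (T : ℕ) (ω : ℕ → ℤ) (lam h : ℝ) (α β : ZMod T) (x : ℕ) : ℝ :=
  Real.log ((1 + Real.exp (-2 * (lam * (xiM T ω α β : ℝ) + lam * h * x))) / 2)

/-- The matrix `A_{α,β}(b,λ,h)`. -/
def Amat (T : ℕ) (ω : ℕ → ℤ) (b lam h : ℝ) (α β : ZMod T) : ℝ :=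
  pmat T α β * ∑' x : ℕ, Kcond T α β x * Real.exp (PhiM T ω lam h α β x - b * x)

/-- The Perron–Frobenius eigenvalue of a matrix with positive entries: the unique
eigenvalue admitting a strictly positive eigenvector. -/
def PFeig {T : ℕ} (A : ZMod T → ZMod T → ℝ) : ℝ :=
  sSup {r : ℝ | ∃ v : ZMod T → ℝ, (∀ i, 0 < v i) ∧ ∀ i, (∑' j : ZMod T, A i j * v j) = r * v i}

/-- `Z(b,λ,h)`, the Perron–Frobenius eigenvalue of `A(b,λ,h)`. -/
def Zeig (T : ℕ) (ω : ℕ → ℤ) (b lam h : ℝ) : ℝ := PFeig (Amat T ω b lam h)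

open Classical in
/-- `b̃(λ,h)`: the unique `b > 0` solving `Z(b,λ,h) = 1` if it exists, and `0` otherwise. -/
def btilde (T : ℕ) (ω : ℕ → ℤ) (lam h : ℝ) : ℝ :=
  if hb : ∃ b > 0, Zeig T ω b lam h = 1 then hb.choose else 0

/-- The state space `𝕊 × 𝕊 × 2ℕ` (the last coordinate records the even excursion length). -/
abbrev Sp (T : ℕ) := ZMod T × ZMod T × ℕ

/-- First `𝕊`-marginal of `μ`. -/
def marg1 {T : ℕ} (μ : Sp T → ℝ) (α : ZMod T) : ℝ := ∑' q : ZMod T × ℕ, μ (α, q.1, q.2)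

/-- Second `𝕊`-marginal of `μ`. -/
def marg2 {T : ℕ} (μ : Sp T → ℝ) (β : ZMod T) : ℝ := ∑' q : ZMod T × ℕ, μ (q.1, β, q.2)

/-- The set `𝒫`: probability measures on `𝕊 × 𝕊 × 2ℕ` with equal `𝕊`-marginals,
supported on `{(α,β,x) : x ∈ 2ℕ, x/2 ∈ β - α}`. -/
def memP {T : ℕ} (μ : Sp T → ℝ) : Prop :=
  (∀ p, 0 ≤ μ p) ∧ HasSum μ 1 ∧
    (∀ p : Sp T, μ p ≠ 0 →
      p.2.2 % 2 = 0 ∧ 2 ≤ p.2.2 ∧ ((p.2.2 / 2 : ℕ) : ZMod T) = p.2.1 - p.1) ∧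
    ∀ γ, marg1 μ γ = marg2 μ γ

/-- The nonnegative summand `a log (a/c) - a + c` of relative entropy. -/
def klF (a c : ℝ) : ℝ := a * Real.log (a / c) - a + c

/-- Relative entropy `H(μ | ν) ∈ [0,∞]` of two probability measures on a countable space. -/
def Dkl {T : ℕ} (μ ν : Sp T → ℝ) : ℝ≥0∞ := ∑' p : Sp T, ENNReal.ofReal (klF (μ p) (ν p))

/-- The rate functional `I(μ) = ∑ μ(α,β,x) log (μ(α,β,x)/(μ(α) p_{α,β} K_{α,β}(x))) ∈ [0,∞]`. -/
def Ifun (T : ℕ) (μ : Sp T → ℝ) : ℝ≥0∞ :=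
  ∑' p : Sp T,
    ENNReal.ofReal (klF (μ p) (marg1 μ p.1 * pmat T p.1 p.2.1 * Kcond T p.1 p.2.1 p.2.2))

/-- `Q(μ) = ∑ Φ^{λ,h}_{α,β}(x) μ(α,β,x) - I(μ)`, with values in `[-∞,∞)`. -/
def Qfun (T : ℕ) (ω : ℕ → ℤ) (lam h : ℝ) (μ : Sp T → ℝ) : EReal :=
  ((∑' p : Sp T, PhiM T ω lam h p.1 p.2.1 p.2.2 * μ p : ℝ) : EReal) - (Ifun T μ : EReal)

/-- The measure `μ_b^{λ,h}(α,β,x) = π(α) p_{α,β} K_{α,β}(x) exp(Φ(x) - bx) v_β/(Z v_α)`. -/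
def muB (T : ℕ) (ω : ℕ → ℤ) (b lam h : ℝ) (π v : ZMod T → ℝ) (p : Sp T) : ℝ :=
  π p.1 * pmat T p.1 p.2.1 * Kcond T p.1 p.2.1 p.2.2 *
      Real.exp (PhiM T ω lam h p.1 p.2.1 p.2.2 - b * p.2.2) * v p.2.1 /
    (Zeig T ω b lam h * v p.1)

/-- `v` is a strictly positive right Perron–Frobenius eigenvector of `A(b,λ,h)` and `π` is
the probability left eigenvector (with eigenvalue 1) of the associated stochastic matrix
`(A_{α,β} v_β / (Z v_α))`. -/
def IsPF (T : ℕ) (ω : ℕ → ℤ) (b lam h : ℝ) (π v : ZMod T → ℝ) : Prop :=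
  (∀ i, 0 < v i) ∧
    (∀ i, (∑' j : ZMod T, Amat T ω b lam h i j * v j) = Zeig T ω b lam h * v i) ∧
    (∀ i, 0 ≤ π i) ∧ (∑' i : ZMod T, π i) = 1 ∧
    ∀ j, (∑' i : ZMod T, π i * (Amat T ω b lam h i j * v j / (Zeig T ω b lam h * v i))) = π j

/-- `H̃(μ | ν)`: the difference of relative entropies
`H(μ | ν) - H(μ_1 | ν_1)`, with values in `[-∞,∞]`. -/
def Htil {T : ℕ} (μ ν : Sp T → ℝ) : EReal :=
  (Dkl μ ν : EReal) - ((∑' α : ZMod T, klF (marg1 μ α) (marg1 ν α) : ℝ) : EReal)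

open Classical in
/-- `f(b) = ∑_{α,β,x} x μ_b^{λ,h}(α,β,x)` (defined through a choice of the
Perron–Frobenius data, on which it does not depend). -/
def fmean (T : ℕ) (ω : ℕ → ℤ) (b lam h : ℝ) : ℝ :=
  if hpf : ∃ w : (ZMod T → ℝ) × (ZMod T → ℝ), IsPF T ω b lam h w.1 w.2 then
    ∑' p : Sp T, (p.2.2 : ℝ) * muB T ω b lam h hpf.choose.1 hpf.choose.2 p
  else 0

/-- `Φ̂_{α,β}(x)` from the large-`λ` asymptotics. -/
def PhiHat (T : ℕ) (ω : ℕ → ℤ) (M : ℝ) (α β : ZMod T) (x : ℕ) : ℝ :=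
  -Real.log 2 +
    (if xiM T ω α β = -(x : ℤ) then Real.log (1 + Real.exp (2 * M * x)) else 0)

/-- `Ẑ(M)`, the Perron–Frobenius eigenvalue of `(p_{α,β} ∑_x K_{α,β}(x) exp (Φ̂_{α,β}(x)))`. -/
def Zhat (T : ℕ) (ω : ℕ → ℤ) (M : ℝ) : ℝ :=
  PFeig fun α β : ZMod T => pmat T α β * ∑' x : ℕ, Kcond T α β x * Real.exp (PhiHat T ω M α β x)

/-- The successive return times to `0` of the walk (`sInf ∅ = 0` on the irrelevant
event that the walk does not return). -/
def eta : ℕ → (ℕ → Bool) → ℕ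
  | 0, _ => 0
  | k + 1, y => sInf {x | eta k y < x ∧ walk y x = 0}

/-- Probability measures on `𝕊 × 𝕊 × 2ℕ`, with the topology of weak convergence
(= pointwise convergence on a countable discrete space). -/
abbrev PM (T : ℕ) := {μ : Sp T → ℝ // (∀ p, 0 ≤ μ p) ∧ HasSum μ 1}

/-- The empirical measure `L_m` of `{(α_j, β_j, Δη_j)}_{j<m}` along the path `y`. -/
def LmFun (T : ℕ) (m : ℕ) (y : ℕ → Bool) (p : Sp T) : ℝ :=
  (cardOf fun j : Fin m =>
      ((eta j.val y / 2 : ℕ) : ZMod T) = p.1 ∧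
        ((eta (j.val + 1) y / 2 : ℕ) : ZMod T) = p.2.1 ∧
        eta (j.val + 1) y - eta j.val y = p.2.2 : ℕ) / (m : ℝ)

open Classical in
/-- `P(L_m ∈ A)`: the probability that the `m`-th return to `0` occurs (at some time `n`)
and the empirical measure `L_m` belongs to `A`, written via cylinder sets. -/
def Pevent (T : ℕ) (A : Set (PM T)) (m : ℕ) : ℝ :=
  ∑' n : ℕ, (1 / 2 : ℝ) ^ n *
    (cardOf fun y : Fin n → Bool =>
      eta m (ext y) = n ∧ (∀ j, j < m → eta j (ext y) < eta (j + 1) (ext y)) ∧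
        ∃ hpm : (∀ p, 0 ≤ LmFun T m (ext y) p) ∧ HasSum (LmFun T m (ext y)) 1,
          (⟨LmFun T m (ext y), hpm⟩ : PM T) ∈ A : ℕ)

open Classical in
/-- The rate functional on probability measures: `I(μ)` if `μ ∈ 𝒫` and `+∞` otherwise. -/
def IfullPM {T : ℕ} (μ : PM T) : ℝ≥0∞ := if memP μ.1 then Ifun T μ.1 else ⊤

open Classical in
/-- `log` with values in `[-∞,∞)`: `elog r = -∞` for `r ≤ 0`. -/
def elog (r : ℝ) : EReal := if r ≤ 0 then ⊥ else ((Real.log r : ℝ) : EReal)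

/-- The space `(𝕊 × 2ℕ) × (𝕊 × 2ℕ)`. -/
abbrev W (T : ℕ) := (ZMod T × ℕ) × (ZMod T × ℕ)

/-- The transition kernel `q((α,x),(α',x')) = p_{α,α'} K_{α,α'}(x')`. -/
def qker (T : ℕ) (w w' : ZMod T × ℕ) : ℝ := pmat T w.1 w'.1 * Kcond T w.1 w'.1 w'.2

/-- First marginal of a measure on `(𝕊 × 2ℕ)²`. -/
def nu1 {T : ℕ} (ν : W T → ℝ) (w : ZMod T × ℕ) : ℝ := ∑' w' : ZMod T × ℕ, ν (w, w')

/-- Second marginal of a measure on `(𝕊 × 2ℕ)²`. -/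
def nu2 {T : ℕ} (ν : W T → ℝ) (w : ZMod T × ℕ) : ℝ := ∑' w' : ZMod T × ℕ, ν (w', w)

/-- `ν̂(α,β,x) = ∑_z ν(α,z,β,x)`. -/
def nuHat {T : ℕ} (ν : W T → ℝ) (p : Sp T) : ℝ := ∑' z : ℕ, ν ((p.1, z), (p.2.1, p.2.2))

open Classical in
/-- `Î(ν) = H(ν | ν₁ ⊗ q)` if the two marginals of `ν` coincide, `+∞` otherwise. -/
def Ihat {T : ℕ} (ν : W T → ℝ) : ℝ≥0∞ :=
  if ∀ w, nu1 ν w = nu2 ν w then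
    ∑' w : W T, ENNReal.ofReal (klF (ν w) (nu1 ν w.1 * qker T w.1 w.2))
  else ⊤

/-- Relative entropy `H(ν | ρ) ∈ [0,∞]` on `(𝕊 × 2ℕ)²`. -/
def DklW {T : ℕ} (ν ρ : W T → ℝ) : ℝ≥0∞ := ∑' w : W T, ENNReal.ofReal (klF (ν w) (ρ w))

/-- `μ̄((α,x),(α',x')) = (∑_γ μ(γ,α,x) / ∑_{γ,z} μ(γ,α,z)) μ(α,α',x')`
(with the convention that the value is `0` when the denominator vanishes). -/
def mubar {T : ℕ} (μ : Sp T → ℝ) (w : W T) : ℝ :=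
  ((∑' γ : ZMod T, μ (γ, w.1.1, w.1.2)) / marg2 μ w.1.1) * μ (w.1.1, w.2.1, w.2.2)

end Copoly

namespace Copoly

/-! ### Part A: walk and counting basics -/

lemma walk_zero (y : ℕ → Bool) : walk y 0 = 0 := Finset.sum_range_zero _

lemma walk_succ (y : ℕ → Bool) (x : ℕ) : walk y (x + 1) = walk y x + step (y x) :=
  Finset.sum_range_succ _ _

lemma walk_congr {y y' : ℕ → Bool} {x : ℕ} (h : ∀ i, i < x → y i = y' i) :
    walk y x = walk y' x :=
  Finset.sum_congr rfl fun i hi => by rw [h i (Finset.mem_range.mp hi)]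

lemma walk_add (y : ℕ → Bool) (a t : ℕ) :
    walk y (a + t) = walk y a + walk (fun j => y (a + j)) t :=
  Finset.sum_range_add _ a t

lemma even_walk_add (y : ℕ → Bool) (x : ℕ) : Even (walk y x + x) := by
  induction x with
  | zero => simp [walk_zero]
  | succ n ih =>
      have h : walk y (n + 1) + ((n : ℤ) + 1) = (walk y n + n) + (step (y n) + 1) := by
        rw [walk_succ]; ring
      have h2 : Even (step (y n) + 1) := by cases hyn : y n <;> simp [step, hyn]
      have := ih.add h2
      rw [← h] at this
      push_cast
      exact this

lemma even_of_walk_eq_zero {y : ℕ → Bool} {x : ℕ} (h : walk y x = 0) : Even x := by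
  have := even_walk_add y x
  rw [h, zero_add] at this
  exact Int.even_coe_nat x |>.mp this

open Classical in
lemma cardOf_eq {α : Type*} [Fintype α] (P : α → Prop) :
    cardOf P = Nat.card {x // P x} := by
  rw [Nat.card_eq_fintype_card, Fintype.card_subtype, cardOf]

lemma cardOf_congr {α : Type*} [Fintype α] {P Q : α → Prop} (h : ∀ x, P x ↔ Q x) :
    cardOf P = cardOf Q := by
  have : P = Q := funext fun x => propext (h x)
  rw [this]

open Classical in
lemma cardOf_le_card {α : Type*} [Fintype α] (P : α → Prop) :
    cardOf P ≤ Fintype.card α := by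
  rw [cardOf_eq, Nat.card_eq_fintype_card]
  exact Fintype.card_subtype_le _

lemma cardOf_eq_filter_card {α : Type*} [Fintype α] (P : α → Prop) [DecidablePred P] :
    cardOf P = (Finset.filter P Finset.univ).card := by
  rw [cardOf]
  exact congrArg Finset.card (Finset.filter_congr_decidable _ _ _)

/-- restriction to the first `n` coordinates -/
def restN {n m : ℕ} (y : Fin (n + m) → Bool) : Fin n → Bool := fun i => y (Fin.castAdd m i)

/-- restriction to the last `m` coordinates -/
def restM {n m : ℕ} (y : Fin (n + m) → Bool) : Fin m → Bool := fun j => y (Fin.natAdd n j)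

lemma ext_restN {n m : ℕ} (y : Fin (n + m) → Bool) (i : ℕ) (hi : i < n) :
    ext (restN y) i = ext y i := by
  have h2 : i < n + m := lt_of_lt_of_le hi (Nat.le_add_right _ _)
  simp only [ext, dif_pos hi, dif_pos h2]
  rfl

lemma ext_restM {n m : ℕ} (y : Fin (n + m) → Bool) :
    (fun j => ext y (n + j)) = ext (restM y) := by
  funext j
  by_cases hj : j < m
  · have h2 : n + j < n + m := Nat.add_lt_add_left hj n
    simp only [ext, dif_pos hj, dif_pos h2]
    rfl
  · have h2 : ¬ (n + j < n + m) := by omega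
    simp only [ext, dif_neg hj, dif_neg h2]

/-- the splitting equivalence -/
def splitEquiv (n m : ℕ) : (Fin (n + m) → Bool) ≃ (Fin n → Bool) × (Fin m → Bool) :=
  (Equiv.arrowCongr finSumFinEquiv.symm (Equiv.refl Bool)).trans
    (Equiv.sumArrowEquivProdArrow _ _ _)

lemma splitEquiv_fst (n m : ℕ) (y : Fin (n + m) → Bool) :
    ((splitEquiv n m) y).1 = restN y := rfl

lemma splitEquiv_snd (n m : ℕ) (y : Fin (n + m) → Bool) :
    ((splitEquiv n m) y).2 = restM y := rfl

lemma cardOf_split {n m : ℕ} (P Q : (ℕ → Bool) → Prop)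
    (hP : ∀ y y' : ℕ → Bool, (∀ i, i < n → y i = y' i) → P y → P y') :
    cardOf (fun y : Fin (n + m) → Bool => P (ext y) ∧ Q (fun j => ext y (n + j)))
      = cardOf (fun y : Fin n → Bool => P (ext y)) *
        cardOf (fun y : Fin m → Bool => Q (ext y)) := by
  classical
  rw [cardOf_eq, cardOf_eq, cardOf_eq, ← Nat.card_prod]
  refine Nat.card_congr ?_
  refine (Equiv.subtypeEquiv (splitEquiv n m) ?_).trans (Equiv.subtypeProdEquivProd)
  intro y
  rw [splitEquiv_fst, splitEquiv_snd, ext_restM]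
  constructor
  · rintro ⟨h1, h2⟩
    exact ⟨hP _ _ (fun i hi => (ext_restN y i hi).symm) h1, h2⟩
  · rintro ⟨h1, h2⟩
    exact ⟨hP _ _ (fun i hi => ext_restN y i hi) h1, h2⟩

end Copoly
namespace Copoly

/-! ### Part B: first return counting, renewal, recurrence -/

/-- first return to zero at time exactly `x` -/
def FRp (x : ℕ) (y : ℕ → Bool) : Prop :=
  walk y x = 0 ∧ ∀ z, 0 < z → z < x → walk y z ≠ 0

lemma FRp_congr {x : ℕ} {y y' : ℕ → Bool} (h : ∀ i, i < x → y i = y' i) (hy : FRp x y) :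
    FRp x y' := by
  obtain ⟨h0, h1⟩ := hy
  constructor
  · rw [← walk_congr h]; exact h0
  · intro z hz1 hz2
    rw [← walk_congr (fun i hi => h i (lt_trans hi hz2))]
    exact h1 z hz1 hz2

/-- number of paths of length `x` with first return at `x` -/
def cfr (x : ℕ) : ℕ := cardOf (fun y : Fin x → Bool => FRp x (ext y))

/-- number of paths of length `N` ending at `0` -/
def Dret (N : ℕ) : ℕ := cardOf (fun y : Fin N → Bool => walk (ext y) N = 0)

lemma Kret_eq_cfr {x : ℕ} (hx : x ≠ 0) : Kret x = (1/2 : ℝ)^x * cfr x := by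
  rw [Kret, if_neg hx]; rfl

lemma Kret_nonneg (x : ℕ) : 0 ≤ Kret x := by
  rw [Kret]
  split
  · exact le_rfl
  · positivity

lemma Dret_zero : Dret 0 = 1 := by
  classical
  rw [Dret, cardOf_eq_filter_card]
  rw [Finset.filter_true_of_mem (fun x _ => walk_zero _)]
  simp

lemma cardOf_true {α : Type*} [Fintype α] : cardOf (fun _ : α => True) = Fintype.card α := by
  classical
  rw [cardOf_eq_filter_card]
  simp

lemma exists_first_return {y : ℕ → Bool} {N : ℕ} (hN : 1 ≤ N) (h0 : walk y (2*N) = 0) :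
    ∃ n, 1 ≤ n ∧ n ≤ N ∧ FRp (2*n) y := by
  have hmem : 2*N ∈ {z | 0 < z ∧ walk y z = 0} := ⟨by omega, h0⟩
  have hne : {z | 0 < z ∧ walk y z = 0}.Nonempty := ⟨_, hmem⟩
  have hz0 : sInf {z | 0 < z ∧ walk y z = 0} ∈ {z | 0 < z ∧ walk y z = 0} := Nat.sInf_mem hne
  have hz0le : sInf {z | 0 < z ∧ walk y z = 0} ≤ 2*N := Nat.sInf_le hmem
  have hpos : 0 < sInf {z | 0 < z ∧ walk y z = 0} := hz0.1
  have hwz : walk y (sInf {z | 0 < z ∧ walk y z = 0}) = 0 := hz0.2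
  obtain ⟨n, hn⟩ := even_of_walk_eq_zero hwz
  have h2n : sInf {z | 0 < z ∧ walk y z = 0} = 2*n := by omega
  refine ⟨n, by omega, by omega, ?_, ?_⟩
  · rw [← h2n]; exact hwz
  · intro z hz1 hz2 hzeq
    have : sInf {z | 0 < z ∧ walk y z = 0} ≤ z := Nat.sInf_le ⟨hz1, hzeq⟩
    omega

lemma card_fr_and (N n m : ℕ) (Q : (ℕ → Bool) → Prop) :
    cardOf (fun y : Fin (2*n + 2*m) → Bool => FRp (2*n) (ext y) ∧ Q (fun j => ext y (2*n + j)))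
      = cfr (2*n) * cardOf (fun y : Fin (2*m) → Bool => Q (ext y)) :=
  cardOf_split _ _ (fun _ _ h => FRp_congr h)

lemma Dret_renewal {N : ℕ} (hN : 1 ≤ N) :
    Dret (2*N) = ∑ n ∈ Finset.Icc 1 N, cfr (2*n) * Dret (2*(N-n)) := by
  classical
  rw [Dret, cardOf_eq_filter_card]
  have hU : Finset.filter (fun y : Fin (2*N) → Bool => walk (ext y) (2*N) = 0) Finset.univ
      = (Finset.Icc 1 N).biUnion (fun n => Finset.filter
          (fun y : Fin (2*N) → Bool => FRp (2*n) (ext y) ∧ walk (ext y) (2*N) = 0)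
          Finset.univ) := by
    ext y
    simp only [Finset.mem_filter, Finset.mem_biUnion, Finset.mem_univ, true_and,
      Finset.mem_Icc]
    constructor
    · intro h0
      obtain ⟨n, h1, h2, h3⟩ := exists_first_return hN h0
      exact ⟨n, ⟨h1, h2⟩, h3, h0⟩
    · rintro ⟨n, _, _, h⟩; exact h
  rw [hU, Finset.card_biUnion]
  · refine Finset.sum_congr rfl ?_
    intro n hn
    rw [Finset.mem_Icc] at hn
    have hm : 2*N = 2*n + 2*(N-n) := by omega
    rw [← cardOf_eq_filter_card]
    rw [hm]
    rw [cardOf_congr (Q := fun y : Fin (2*n + 2*(N-n)) → Bool =>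
        FRp (2*n) (ext y) ∧ (fun w => walk w (2*(N-n)) = 0) (fun j => ext y (2*n + j)))]
    · simpa [Dret] using card_fr_and N n (N-n) (fun w => walk w (2*(N-n)) = 0)
    · intro y
      constructor
      · rintro ⟨hfr, h0⟩
        refine ⟨hfr, ?_⟩
        have := walk_add (ext y) (2*n) (2*(N-n))
        rw [hfr.1] at this
        simpa [this] using h0
      · rintro ⟨hfr, h0⟩
        refine ⟨hfr, ?_⟩
        have := walk_add (ext y) (2*n) (2*(N-n))
        rw [hfr.1] at this
        simpa [this] using h0
  · intro n hn n' hn' hne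
    rw [Finset.mem_coe, Finset.mem_Icc] at hn hn'
    simp only [Function.onFun, Finset.disjoint_left, Finset.mem_filter, Finset.mem_univ, true_and]
    rintro y ⟨hfr, -⟩ ⟨hfr', -⟩
    rcases lt_or_gt_of_ne hne with hlt | hlt
    · exact hfr'.2 (2*n) (by omega) (by omega) hfr.1
    · exact hfr.2 (2*n') (by omega) (by omega) hfr'.1

lemma sum_cfr_mul_le (N : ℕ) :
    ∑ n ∈ Finset.Icc 1 N, cfr (2*n) * 2^(2*(N-n)) ≤ 2^(2*N) := by
  classical
  have hcard : ∀ n ∈ Finset.Icc 1 N,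
      (Finset.filter (fun y : Fin (2*N) → Bool => FRp (2*n) (ext y)) Finset.univ).card
        = cfr (2*n) * 2^(2*(N-n)) := by
    intro n hn
    rw [Finset.mem_Icc] at hn
    have hm : 2*N = 2*n + 2*(N-n) := by omega
    rw [← cardOf_eq_filter_card, hm]
    rw [cardOf_congr (Q := fun y : Fin (2*n + 2*(N-n)) → Bool =>
        FRp (2*n) (ext y) ∧ (fun _ => True) (fun j => ext y (2*n + j)))]
    · rw [card_fr_and N n (N-n) (fun _ => True), cardOf_true]
      simp [Fintype.card_fun]
    · intro y; simp
  calc ∑ n ∈ Finset.Icc 1 N, cfr (2*n) * 2^(2*(N-n))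
      = ∑ n ∈ Finset.Icc 1 N,
        (Finset.filter (fun y : Fin (2*N) → Bool => FRp (2*n) (ext y)) Finset.univ).card :=
        (Finset.sum_congr rfl hcard).symm
    _ = ((Finset.Icc 1 N).biUnion (fun n =>
          Finset.filter (fun y : Fin (2*N) → Bool => FRp (2*n) (ext y)) Finset.univ)).card := by
        rw [Finset.card_biUnion]
        intro n hn n' hn' hne
        rw [Finset.mem_coe, Finset.mem_Icc] at hn hn'
        simp only [Function.onFun, Finset.disjoint_left, Finset.mem_filter, Finset.mem_univ, true_and]
        rintro y hfr hfr'
        rcases lt_or_gt_of_ne hne with hlt | hlt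
        · exact hfr'.2 (2*n) (by omega) (by omega) hfr.1
        · exact hfr.2 (2*n') (by omega) (by omega) hfr'.1
    _ ≤ (Finset.univ : Finset (Fin (2*N) → Bool)).card := Finset.card_le_card (Finset.subset_univ _)
    _ = 2^(2*N) := by simp [Fintype.card_fun]

end Copoly
namespace Copoly

/-! ### Part C: recurrence of the simple random walk -/

/-- `u_N = P(S_{2N} = 0)` -/
def uf (N : ℕ) : ℝ := (1/2 : ℝ)^(2*N) * Dret (2*N)

lemma uf_nonneg (N : ℕ) : 0 ≤ uf N := by rw [uf]; positivity

lemma uf_zero : uf 0 = 1 := by simp [uf, Dret_zero]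

lemma Kret_odd {x : ℕ} (hx : ¬ Even x) : Kret x = 0 := by
  rcases Nat.eq_zero_or_pos x with h | h
  · rw [Kret, if_pos h]
  · rw [Kret_eq_cfr (by omega)]
    have : cfr x = 0 := by
      classical
      rw [cfr, cardOf_eq_filter_card, Finset.card_eq_zero, Finset.filter_eq_empty_iff]
      intro y _ hy
      exact hx (even_of_walk_eq_zero hy.1)
    simp [this]

lemma uf_renewal {N : ℕ} (hN : 1 ≤ N) :
    uf N = ∑ n ∈ Finset.Icc 1 N, Kret (2*n) * uf (N - n) := by
  rw [uf, Dret_renewal hN, Nat.cast_sum, Finset.mul_sum]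
  refine Finset.sum_congr rfl ?_
  intro n hn
  rw [Finset.mem_Icc] at hn
  rw [Kret_eq_cfr (by omega), uf]
  have h2 : 2*N = 2*n + 2*(N-n) := by omega
  rw [h2]
  push_cast
  rw [pow_add]
  ring

lemma sum_Kf_le (N : ℕ) : ∑ n ∈ Finset.Icc 1 N, Kret (2*n) ≤ 1 := by
  have hterm : ∀ n ∈ Finset.Icc 1 N,
      Kret (2*n) = (1/2:ℝ)^(2*N) * ((cfr (2*n) * 2^(2*(N-n)) : ℕ) : ℝ) := by
    intro n hn
    rw [Finset.mem_Icc] at hn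
    rw [Kret_eq_cfr (by omega)]
    have h3 : 2*N = 2*n + 2*(N-n) := by omega
    have h5 : ((1:ℝ)/2)^(2*(N-n)) * 2^(2*(N-n)) = 1 := by rw [← mul_pow]; norm_num
    rw [h3]
    push_cast
    rw [pow_add]
    linear_combination (-((1/2:ℝ)^(2*n) * (cfr (2*n):ℝ))) * h5
  calc ∑ n ∈ Finset.Icc 1 N, Kret (2*n)
      = ∑ n ∈ Finset.Icc 1 N, (1/2:ℝ)^(2*N) * ((cfr (2*n) * 2^(2*(N-n)) : ℕ) : ℝ) :=
        Finset.sum_congr rfl hterm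
    _ = (1/2:ℝ)^(2*N) * ∑ n ∈ Finset.Icc 1 N, ((cfr (2*n) * 2^(2*(N-n)) : ℕ) : ℝ) := by
        rw [← Finset.mul_sum]
    _ ≤ (1/2:ℝ)^(2*N) * (2:ℝ)^(2*N) := by
        refine mul_le_mul_of_nonneg_left ?_ (by positivity)
        rw [← Nat.cast_sum]
        exact_mod_cast sum_cfr_mul_le N
    _ = 1 := by rw [← mul_pow]; norm_num

lemma summable_Kf : Summable (fun n => Kret (2*n)) := by
  refine summable_of_sum_range_le (c := 1) (fun n => Kret_nonneg _) ?_
  intro N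
  calc ∑ n ∈ Finset.range N, Kret (2*n) ≤ ∑ n ∈ Finset.Icc 1 N, Kret (2*n) + Kret 0 := by
        rcases Nat.eq_zero_or_pos N with h | h
        · simp [h, Kret]
        · have : Finset.range N = insert 0 (Finset.Icc 1 (N-1)) := by
            ext i; simp [Finset.mem_range, Finset.mem_Icc]; omega
          rw [this, Finset.sum_insert (by simp)]
          have : Kret (2*0) = Kret 0 := by norm_num
          rw [this]
          have hsub : Finset.Icc 1 (N-1) ⊆ Finset.Icc 1 N := by
            intro i hi; rw [Finset.mem_Icc] at hi ⊢; omega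
          have := Finset.sum_le_sum_of_subset_of_nonneg hsub
            (fun i _ _ => Kret_nonneg (2*i))
          linarith
    _ ≤ 1 := by
        have : Kret 0 = 0 := by rw [Kret, if_pos rfl]
        rw [this, add_zero]
        exact sum_Kf_le N

lemma centralBinom_le_Dret (N : ℕ) : Nat.centralBinom N ≤ Dret (2*N) := by
  classical
  rw [Dret, cardOf_eq_filter_card]
  have key : ∀ s : Finset (Fin (2*N)), s.card = N →
      walk (ext (fun i => decide (i ∈ s))) (2*N) = 0 := by
    intro s hs
    have hw : walk (ext (fun i => decide (i ∈ s))) (2*N)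
        = ∑ i : Fin (2*N), step (decide (i ∈ s)) := by
      rw [walk, Finset.sum_range]
      refine Finset.sum_congr rfl ?_
      intro i _
      congr 1
      simp [ext]
    rw [hw]
    have : ∀ i : Fin (2*N), step (decide (i ∈ s)) = 2 * (if i ∈ s then (1:ℤ) else 0) - 1 := by
      intro i
      by_cases h : i ∈ s <;> simp [step, h]
    simp only [this]
    rw [Finset.sum_sub_distrib, ← Finset.mul_sum, Finset.sum_ite_mem, Finset.univ_inter,
      Finset.sum_const, Finset.sum_const, hs, Finset.card_univ, Fintype.card_fin,
      nsmul_eq_mul, nsmul_eq_mul]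
    push_cast
    ring
  have hinj : Set.InjOn (fun s : Finset (Fin (2*N)) => (fun i => decide (i ∈ s) : Fin (2*N) → Bool))
      (Finset.powersetCard N (Finset.univ : Finset (Fin (2*N)))) := by
    intro s _ t _ hst
    ext i
    have := congrFun hst i
    simpa using this
  have := Finset.card_le_card_of_injOn (f := fun s : Finset (Fin (2*N)) =>
      (fun i => decide (i ∈ s) : Fin (2*N) → Bool))
    (s := Finset.powersetCard N (Finset.univ : Finset (Fin (2*N))))
    (t := Finset.filter (fun y : Fin (2*N) → Bool => walk (ext y) (2*N) = 0) Finset.univ)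
    (fun s hs => by
      rw [Finset.mem_coe, Finset.mem_powersetCard] at hs
      simp only [Finset.mem_coe, Finset.mem_filter, Finset.mem_univ, true_and]
      exact key s hs.2) hinj
  calc Nat.centralBinom N = (2*N).choose N := Nat.centralBinom_eq_two_mul_choose N
    _ = (Finset.powersetCard N (Finset.univ : Finset (Fin (2*N)))).card := by
        rw [Finset.card_powersetCard, Finset.card_univ, Fintype.card_fin]
    _ ≤ _ := this

lemma uf_lb {N : ℕ} (hN : 1 ≤ N) : 1 / (2*N : ℝ) ≤ uf N := by
  have h1 : (4:ℕ)^N ≤ 2 * N * Nat.centralBinom N :=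
    Nat.four_pow_le_two_mul_self_mul_centralBinom N hN
  have h2 : (4:ℝ)^N ≤ 2 * N * Dret (2*N) := by
    calc (4:ℝ)^N = ((4^N : ℕ) : ℝ) := by push_cast; ring
      _ ≤ ((2 * N * Nat.centralBinom N : ℕ) : ℝ) := by exact_mod_cast h1
      _ ≤ 2 * N * Dret (2*N) := by
          push_cast
          have := centralBinom_le_Dret N
          have hN' : (0:ℝ) ≤ 2 * N := by positivity
          nlinarith [(Nat.cast_le (α := ℝ)).mpr this]
  rw [uf]
  have h3 : (1/2:ℝ)^(2*N) = ((4:ℝ)^N)⁻¹ := by rw [pow_mul, ← inv_pow]; norm_num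
  rw [h3]
  have hN4 : (0:ℝ) < (4:ℝ)^N := by positivity
  have hN2 : (0:ℝ) < 2*(N:ℝ) := by
    have : (1:ℝ) ≤ (N:ℝ) := by exact_mod_cast hN
    linarith
  rw [div_le_iff₀ hN2]
  have h6 : ((4:ℝ)^N)⁻¹ * (4^N) ≤ ((4:ℝ)^N)⁻¹ * (2*N*Dret (2*N)) :=
    mul_le_mul_of_nonneg_left h2 (by positivity)
  rw [inv_mul_cancel₀ (ne_of_gt hN4)] at h6
  calc (1:ℝ) ≤ ((4:ℝ)^N)⁻¹ * (2*N*Dret (2*N)) := h6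
    _ = ((4:ℝ)^N)⁻¹ * ↑(Dret (2*N)) * (2*↑N) := by ring

lemma tsum_Kf_eq_one : ∑' n : ℕ, Kret (2*n) = 1 := by
  have hle : ∑' n : ℕ, Kret (2*n) ≤ 1 := by
    refine Real.tsum_le_of_sum_range_le (fun n => Kret_nonneg _) ?_
    intro N
    calc ∑ n ∈ Finset.range N, Kret (2*n) ≤ ∑ n ∈ Finset.Icc 1 N, Kret (2*n) := by
          have h0 : Kret (2*0) = 0 := by rw [Kret]; norm_num
          have : Finset.range N ⊆ insert 0 (Finset.Icc 1 N) := by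
            intro i hi; simp only [Finset.mem_range] at hi
            simp only [Finset.mem_insert, Finset.mem_Icc]; omega
          calc ∑ n ∈ Finset.range N, Kret (2*n)
              ≤ ∑ n ∈ insert 0 (Finset.Icc 1 N), Kret (2*n) :=
                Finset.sum_le_sum_of_subset_of_nonneg this (fun i _ _ => Kret_nonneg _)
            _ = ∑ n ∈ Finset.Icc 1 N, Kret (2*n) := by
                rw [Finset.sum_insert (by simp), h0, zero_add]
      _ ≤ 1 := sum_Kf_le N
  by_contra hne
  have hF : ∑' n : ℕ, Kret (2*n) < 1 := lt_of_le_of_ne hle hne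
  set F := ∑' n : ℕ, Kret (2*n) with hFdef
  have hF0 : 0 ≤ F := tsum_nonneg (fun n => Kret_nonneg _)
  -- partial sums of uf are bounded
  have hUb : ∀ M, ∑ N ∈ Finset.range M, uf N ≤ 1 / (1 - F) := by
    intro M
    induction M with
    | zero =>
        simp only [Finset.range_zero, Finset.sum_empty]
        exact le_of_lt (div_pos one_pos (by linarith))
    | succ M _ =>
      have key : ∑ N ∈ Finset.range (M+1), uf N ≤ 1 + F * ∑ N ∈ Finset.range (M+1), uf N := by
        have hsplit : ∑ N ∈ Finset.range (M+1), uf N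
            = uf 0 + ∑ N ∈ Finset.Icc 1 M, uf N := by
          have : Finset.range (M+1) = insert 0 (Finset.Icc 1 M) := by
            ext i; simp only [Finset.mem_range, Finset.mem_insert, Finset.mem_Icc]; omega
          rw [this, Finset.sum_insert (by simp)]
        have hswap : ∑ N ∈ Finset.Icc 1 M, uf N
            ≤ F * ∑ N ∈ Finset.range (M+1), uf N := by
          have h1 : ∑ N ∈ Finset.Icc 1 M, uf N
              = ∑ N ∈ Finset.Icc 1 M, ∑ n ∈ Finset.Icc 1 N, Kret (2*n) * uf (N - n) := by
            refine Finset.sum_congr rfl ?_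
            intro N hN
            rw [Finset.mem_Icc] at hN
            exact uf_renewal hN.1
          have h2 : ∑ N ∈ Finset.Icc 1 M, ∑ n ∈ Finset.Icc 1 N, Kret (2*n) * uf (N - n)
              = ∑ n ∈ Finset.Icc 1 M, ∑ N ∈ Finset.Icc n M, Kret (2*n) * uf (N - n) := by
            refine Finset.sum_comm' ?_
            intro N n
            simp only [Finset.mem_Icc]
            omega
          have h3 : ∀ n ∈ Finset.Icc 1 M,
              ∑ N ∈ Finset.Icc n M, Kret (2*n) * uf (N - n)
                ≤ Kret (2*n) * ∑ N ∈ Finset.range (M+1), uf N := by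
            intro n hn
            rw [Finset.mem_Icc] at hn
            rw [← Finset.mul_sum]
            refine mul_le_mul_of_nonneg_left ?_ (Kret_nonneg _)
            have h4 : ∑ N ∈ Finset.Icc n M, uf (N - n)
                = ∑ j ∈ Finset.range (M + 1 - n), uf j := by
              rw [← Finset.Ico_add_one_right_eq_Icc, Finset.sum_Ico_eq_sum_range]
              refine Finset.sum_congr rfl ?_
              intro j _
              congr 1
              omega
            rw [h4]
            refine Finset.sum_le_sum_of_subset_of_nonneg ?_ (fun i _ _ => uf_nonneg i)
            intro i hi
            rw [Finset.mem_range] at hi ⊢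
            omega
          calc ∑ N ∈ Finset.Icc 1 M, uf N
              = ∑ n ∈ Finset.Icc 1 M, ∑ N ∈ Finset.Icc n M, Kret (2*n) * uf (N - n) := by
                rw [h1, h2]
            _ ≤ ∑ n ∈ Finset.Icc 1 M, Kret (2*n) * ∑ N ∈ Finset.range (M+1), uf N :=
                Finset.sum_le_sum h3
            _ = (∑ n ∈ Finset.Icc 1 M, Kret (2*n)) * ∑ N ∈ Finset.range (M+1), uf N := by
                rw [Finset.sum_mul]
            _ ≤ F * ∑ N ∈ Finset.range (M+1), uf N := by
                refine mul_le_mul_of_nonneg_right ?_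
                  (Finset.sum_nonneg (fun i _ => uf_nonneg i))
                have : ∑ n ∈ Finset.Icc 1 M, Kret (2*n) ≤ ∑' n, Kret (2*n) := by
                  refine Summable.sum_le_tsum _ (fun n _ => Kret_nonneg _) summable_Kf
                exact this
        linarith [hsplit, uf_zero]
      have hpos : 0 < 1 - F := by linarith
      rw [le_div_iff₀ hpos]
      nlinarith [key]
  -- but partial sums of uf tend to infinity
  have hdiv : ¬ Summable uf := by
    intro hsum
    have h1 : Summable (fun N => uf (N + 1)) := by
      exact (summable_nat_add_iff 1).mpr hsum
    have h2 : Summable (fun N : ℕ => 1 / (2 * ((N:ℝ) + 1))) := by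
      refine Summable.of_nonneg_of_le (fun N => by positivity) ?_ h1
      intro N
      have := uf_lb (N := N + 1) (by omega)
      calc (1:ℝ) / (2 * ((N:ℝ)+1)) = 1 / (2 * ((N+1 : ℕ) : ℝ)) := by push_cast; ring
        _ ≤ uf (N+1) := this
    have h3 : Summable (fun N : ℕ => 1 / ((N:ℝ) + 1)) := by
      have := h2.mul_left 2
      refine this.congr ?_
      intro N
      field_simp
    have h4 : Summable (fun N : ℕ => 1 / ((N:ℝ))) := by
      rw [← summable_nat_add_iff 1]
      refine h3.congr ?_
      intro N
      push_cast
      ring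
    exact Real.not_summable_one_div_natCast h4
  rw [not_summable_iff_tendsto_nat_atTop_of_nonneg uf_nonneg] at hdiv
  obtain ⟨M, hM⟩ := (Filter.tendsto_atTop.mp hdiv (1/(1-F) + 1)).exists
  have := hUb M
  linarith

end Copoly
namespace Copoly

/-! ### Part D: Kret positivity, pmat and Kcond facts -/

lemma walk_updown {n : ℕ} (x : ℕ) (hx : x ≤ 2*n) :
    walk (ext (fun i : Fin (2*n) => decide (i.val < n))) x
      = if x ≤ n then (x : ℤ) else 2*n - x := by
  induction x with
  | zero => simp [walk_zero]
  | succ m ih =>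
      have hm : m ≤ 2*n := by omega
      have hm2 : m < 2*n := by omega
      rw [walk_succ, ih hm]
      have hext : ext (fun i : Fin (2*n) => decide (i.val < n)) m = decide (m < n) := by
        simp [ext, hm2]
      rw [hext]
      by_cases h1 : m < n
      · have hstep : step (decide (m < n)) = 1 := by simp [step, h1]
        rw [hstep, if_pos (by omega : m ≤ n), if_pos (by omega : m + 1 ≤ n)]
        push_cast
        ring
      · have hstep : step (decide (m < n)) = -1 := by simp [step, h1]
        rw [hstep, if_neg (by omega : ¬ (m + 1 ≤ n))]
        by_cases h2 : m ≤ n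
        · rw [if_pos h2]
          have hmn : m = n := by omega
          subst hmn
          push_cast
          ring
        · rw [if_neg h2]
          push_cast
          ring

lemma cfr_pos {n : ℕ} (hn : 1 ≤ n) : 0 < cfr (2*n) := by
  classical
  rw [cfr, cardOf_eq_filter_card, Finset.card_pos]
  refine ⟨fun i : Fin (2*n) => decide (i.val < n), ?_⟩
  rw [Finset.mem_filter]
  refine ⟨Finset.mem_univ _, ?_, ?_⟩
  · rw [walk_updown (2*n) le_rfl, if_neg (by omega)]
    push_cast
    ring
  · intro z hz1 hz2
    rw [walk_updown z (by omega)]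
    split <;> intro hc <;> omega

lemma Kret_pos {n : ℕ} (hn : 1 ≤ n) : 0 < Kret (2*n) := by
  rw [Kret_eq_cfr (by omega)]
  have := cfr_pos hn
  positivity

lemma summable_Kret : Summable Kret := by
  have hinj : Function.Injective (fun n : ℕ => 2*n) := fun a b h => by dsimp at h; omega
  have hvan : ∀ x ∉ Set.range (fun n : ℕ => 2*n), Kret x = 0 := by
    intro x hx
    refine Kret_odd ?_
    rintro ⟨m, hm⟩
    exact hx ⟨m, by dsimp; omega⟩
  exact (hinj.summable_iff hvan).mp summable_Kf

lemma tsum_Kret_eq_one : ∑' x : ℕ, Kret x = 1 := by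
  have hinj : Function.Injective (fun n : ℕ => 2*n) := fun a b h => by dsimp at h; omega
  have hvan : ∀ x ∉ Set.range (fun n : ℕ => 2*n), Kret x = 0 := by
    intro x hx
    refine Kret_odd ?_
    rintro ⟨m, hm⟩
    exact hx ⟨m, by dsimp; omega⟩
  rw [← hinj.tsum_eq (by rw [Function.support_subset_iff']; exact hvan)]
  exact tsum_Kf_eq_one

section Tfacts
variable {T : ℕ}

lemma summable_pmat_summand (α β : ZMod T) :
    Summable (fun n : ℕ => if (n : ZMod T) = β - α then Kret (2*n) else 0) := by
  refine Summable.of_nonneg_of_le (fun n => ?_) (fun n => ?_) summable_Kf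
  · split <;> [exact Kret_nonneg _; exact le_rfl]
  · split <;> [exact le_rfl; exact Kret_nonneg _]

lemma pmat_nonneg (α β : ZMod T) : 0 ≤ pmat T α β :=
  tsum_nonneg fun n => by split <;> [exact Kret_nonneg _; exact le_rfl]

lemma pmat_pos (hT : 0 < T) (α β : ZMod T) : 0 < pmat T α β := by
  haveI : NeZero T := ⟨by omega⟩
  set n₀ : ℕ := (β - α).val + T with hn₀
  have hcast : ((n₀ : ℕ) : ZMod T) = β - α := by
    rw [hn₀]
    push_cast
    rw [ZMod.natCast_self, add_zero]
    exact ZMod.natCast_rightInverse _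
  have hterm : (if ((n₀:ℕ) : ZMod T) = β - α then Kret (2*n₀) else 0) = Kret (2*n₀) :=
    if_pos hcast
  have hpos : 0 < Kret (2*n₀) := Kret_pos (by omega)
  calc (0:ℝ) < Kret (2*n₀) := hpos
    _ = (if ((n₀:ℕ) : ZMod T) = β - α then Kret (2*n₀) else 0) := hterm.symm
    _ ≤ pmat T α β := by
        refine Summable.le_tsum (summable_pmat_summand α β) n₀ (fun m _ => ?_)
        split <;> [exact Kret_nonneg _; exact le_rfl]

lemma pmat_rowsum [NeZero T] (α : ZMod T) :
    ∑ β : ZMod T, pmat T α β = 1 := by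
  have hswap : ∀ n : ℕ,
      (∑ β : ZMod T, if (n : ZMod T) = β - α then Kret (2*n) else 0) = Kret (2*n) := by
    intro n
    rw [Finset.sum_eq_single (α + (n : ZMod T))]
    · rw [if_pos (by ring)]
    · intro β _ hβ
      rw [if_neg]
      intro hc
      exact hβ (by rw [hc]; ring)
    · intro h
      exact absurd (Finset.mem_univ _) h
  calc ∑ β : ZMod T, pmat T α β
      = ∑' n : ℕ, ∑ β : ZMod T, (if (n : ZMod T) = β - α then Kret (2*n) else 0) :=
        (Summable.tsum_finsetSum (fun β _ => summable_pmat_summand α β)).symm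
    _ = ∑' n : ℕ, Kret (2*n) := tsum_congr hswap
    _ = 1 := tsum_Kf_eq_one

end Tfacts

end Copoly
namespace Copoly

section Tfacts2
variable {T : ℕ}

lemma Kcond_eq (α β : ZMod T) (x : ℕ) :
    Kcond T α β x
      = (if x % 2 = 0 ∧ ((x / 2 : ℕ) : ZMod T) = β - α then Kret x else 0) / pmat T α β := by
  rw [Kcond]
  split_ifs with h
  · rfl
  · rw [zero_div]

lemma Kcond_nonneg (α β : ZMod T) (x : ℕ) : 0 ≤ Kcond T α β x := by
  rw [Kcond_eq]
  refine div_nonneg ?_ (pmat_nonneg α β)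
  split <;> [exact Kret_nonneg _; exact le_rfl]

lemma summable_num (α β : ZMod T) :
    Summable (fun x : ℕ => if x % 2 = 0 ∧ ((x / 2 : ℕ) : ZMod T) = β - α then Kret x else 0) := by
  refine Summable.of_nonneg_of_le (fun x => ?_) (fun x => ?_) summable_Kret
  · split <;> [exact Kret_nonneg _; exact le_rfl]
  · split <;> [exact le_rfl; exact Kret_nonneg _]

lemma summable_Kcond (α β : ZMod T) : Summable (Kcond T α β) :=
  ((summable_num α β).div_const (pmat T α β)).congr (fun x => (Kcond_eq α β x).symm)

lemma tsum_num (α β : ZMod T) :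
    ∑' x : ℕ, (if x % 2 = 0 ∧ ((x / 2 : ℕ) : ZMod T) = β - α then Kret x else 0)
      = pmat T α β := by
  have hinj : Function.Injective (fun n : ℕ => 2*n) := fun a b h => by dsimp at h; omega
  have hvan : ∀ x ∉ Set.range (fun n : ℕ => 2*n),
      (if x % 2 = 0 ∧ ((x / 2 : ℕ) : ZMod T) = β - α then Kret x else 0) = 0 := by
    intro x hx
    rw [if_neg]
    rintro ⟨h1, -⟩
    exact hx ⟨x/2, by dsimp; omega⟩
  calc ∑' x : ℕ, (if x % 2 = 0 ∧ ((x / 2 : ℕ) : ZMod T) = β - α then Kret x else 0)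
      = ∑' n : ℕ, (if (2*n) % 2 = 0 ∧ (((2*n) / 2 : ℕ) : ZMod T) = β - α then Kret (2*n) else 0) :=
        (hinj.tsum_eq (by rw [Function.support_subset_iff']; exact hvan)).symm
    _ = ∑' n : ℕ, (if ((n:ℕ) : ZMod T) = β - α then Kret (2*n) else 0) := by
        refine tsum_congr (fun n => ?_)
        have h2 : (2*n)/2 = n := by omega
        simp [h2, Nat.mul_mod_right]
    _ = pmat T α β := rfl

lemma tsum_Kcond (hT : 0 < T) (α β : ZMod T) : ∑' x : ℕ, Kcond T α β x = 1 := by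
  have hpm := pmat_pos hT α β
  calc ∑' x : ℕ, Kcond T α β x
      = (∑' x : ℕ, (if x % 2 = 0 ∧ ((x / 2 : ℕ) : ZMod T) = β - α then Kret x else 0))
          / pmat T α β := by
        rw [← tsum_div_const]
        exact tsum_congr (fun x => Kcond_eq α β x)
    _ = pmat T α β / pmat T α β := by rw [tsum_num]
    _ = 1 := div_self (ne_of_gt hpm)

lemma Kcond_pos (hT : 0 < T) {α β : ZMod T} {x : ℕ} (hx2 : x % 2 = 0) (hx : 2 ≤ x)
    (hcl : ((x / 2 : ℕ) : ZMod T) = β - α) : 0 < Kcond T α β x := by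
  rw [Kcond, if_pos ⟨hx2, hcl⟩]
  refine div_pos ?_ (pmat_pos hT α β)
  have : x = 2 * (x/2) := by omega
  rw [this]
  exact Kret_pos (by omega)

lemma exp_PhiM_eq (ω : ℕ → ℤ) (lam h : ℝ) (α β : ZMod T) (x : ℕ) :
    Real.exp (PhiM T ω lam h α β x)
      = (1 + Real.exp (-2 * (lam * (xiM T ω α β : ℝ) + lam * h * x))) / 2 := by
  rw [PhiM, Real.exp_log (by positivity)]

lemma exp_PhiM_sub_le {lam h b : ℝ} (hlam : 0 ≤ lam) (hh : 0 ≤ h) (hb : 0 ≤ b)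
    (ω : ℕ → ℤ) (α β : ZMod T) (x : ℕ) :
    Real.exp (PhiM T ω lam h α β x - b*x)
      ≤ (1 + Real.exp (2 * lam * |(xiM T ω α β : ℝ)|)) / 2 := by
  set ξ := ((xiM T ω α β : ℤ) : ℝ) with hξ
  rw [Real.exp_sub, exp_PhiM_eq]
  have h1 : (1:ℝ) ≤ Real.exp (b*x) := by
    rw [Real.one_le_exp_iff]
    positivity
  have h2 : Real.exp (-2 * (lam * ξ + lam * h * x)) ≤ Real.exp (2 * lam * |ξ|) := by
    refine Real.exp_le_exp.mpr ?_
    have ha : -lam * ξ ≤ lam * |ξ| := by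
      rcases abs_cases ξ with ⟨he, -⟩ | ⟨he, -⟩ <;> nlinarith [abs_nonneg ξ]
    nlinarith [mul_nonneg (mul_nonneg hlam hh) (Nat.cast_nonneg x)]
  have h3 : (0:ℝ) < (1 + Real.exp (-2 * (lam * ξ + lam * h * x))) / 2 := by positivity
  have h4 : (1 + Real.exp (-2 * (lam * ξ + lam * h * ↑x))) / 2 / Real.exp (b*x)
      ≤ (1 + Real.exp (-2 * (lam * ξ + lam * h * ↑x))) / 2 := by
    rw [div_le_iff₀ (Real.exp_pos _)]
    nlinarith [h3.le, h1]
  refine h4.trans ?_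
  have h5 : (0:ℝ) < 2 := by norm_num
  rw [div_le_div_iff_of_pos_right h5]
  linarith [h2]

lemma abs_PhiM_le {lam h : ℝ} (hlam : 0 ≤ lam) (hh : 0 ≤ h)
    (ω : ℕ → ℤ) (α β : ZMod T) (x : ℕ) :
    |PhiM T ω lam h α β x|
      ≤ Real.log 2 + 2 * lam * |(xiM T ω α β : ℝ)| + 2 * lam * h * x := by
  set ξ := ((xiM T ω α β : ℤ) : ℝ) with hξ
  set z := 2 * (lam * ξ + lam * h * x) with hz
  have hzb : |z| ≤ 2 * lam * |ξ| + 2 * lam * h * x := by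
    have h1 : |z| ≤ |2 * (lam * ξ)| + |2 * (lam * h * x)| := by
      rw [hz]
      calc |2 * (lam * ξ + lam * h * x)| = |2 * (lam * ξ) + 2 * (lam * h * x)| := by ring_nf
        _ ≤ _ := abs_add_le _ _
    have h2 : |2 * (lam * ξ)| = 2 * lam * |ξ| := by
      rw [abs_mul, abs_mul]
      simp [abs_of_nonneg hlam]
      ring
    have h3 : |2 * (lam * h * x)| = 2 * (lam * h * x) := by
      refine abs_of_nonneg ?_
      positivity
    rw [h2, h3] at h1
    linarith
  have hA : (0:ℝ) < (1 + Real.exp (-z)) / 2 := by positivity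
  rw [abs_le]
  constructor
  · have hge : Real.log (1/2 : ℝ) ≤ PhiM T ω lam h α β x := by
      rw [PhiM]
      refine Real.log_le_log (by norm_num) ?_
      have := Real.exp_nonneg (-2 * (lam * ξ + lam * h * x))
      linarith
    have hlog : Real.log (1/2 : ℝ) = - Real.log 2 := by
      rw [one_div, Real.log_inv]
    have hrest : 0 ≤ 2 * lam * |ξ| + 2 * lam * h * x := by positivity
    linarith
  · have hle : PhiM T ω lam h α β x ≤ |z| := by
      rw [PhiM]
      have hAe : (1 + Real.exp (-2 * (lam * ξ + lam * h * x))) / 2 ≤ Real.exp |z| := by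
        have e1 : Real.exp (-2 * (lam * ξ + lam * h * x)) = Real.exp (-z) := by
          rw [hz]; ring_nf
        have e2 : Real.exp (-z) ≤ Real.exp |z| :=
          Real.exp_le_exp.mpr (neg_le_abs z)
        have e3 : (1:ℝ) ≤ Real.exp |z| := by
          rw [Real.one_le_exp_iff]
          exact abs_nonneg z
        rw [e1]
        linarith
      calc Real.log ((1 + Real.exp (-2 * (lam * ξ + lam * h * x))) / 2)
          ≤ Real.log (Real.exp |z|) := Real.log_le_log (by positivity) hAe
        _ = |z| := Real.log_exp _
    have hl2 : (0:ℝ) ≤ Real.log 2 := Real.log_nonneg (by norm_num)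
    linarith

lemma summable_KcondExp {lam h b : ℝ} (hlam : 0 ≤ lam) (hh : 0 ≤ h) (hb : 0 ≤ b)
    (ω : ℕ → ℤ) (α β : ZMod T) :
    Summable (fun x : ℕ => Kcond T α β x * Real.exp (PhiM T ω lam h α β x - b*x)) := by
  refine Summable.of_nonneg_of_le
    (fun x => mul_nonneg (Kcond_nonneg α β x) (Real.exp_pos _).le) (fun x => ?_)
    ((summable_Kcond α β).mul_right ((1 + Real.exp (2 * lam * |(xiM T ω α β : ℝ)|)) / 2))
  exact mul_le_mul_of_nonneg_left (exp_PhiM_sub_le hlam hh hb ω α β x) (Kcond_nonneg α β x)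

lemma Amat_pos (hT : 0 < T) {lam h b : ℝ} (hlam : 0 ≤ lam) (hh : 0 ≤ h) (hb : 0 ≤ b)
    (ω : ℕ → ℤ) (α β : ZMod T) : 0 < Amat T ω b lam h α β := by
  haveI : NeZero T := ⟨by omega⟩
  rw [Amat]
  refine mul_pos (pmat_pos hT α β) ?_
  set x₀ : ℕ := 2*((β - α).val + T) with hx₀
  have hcl : ((x₀ / 2 : ℕ) : ZMod T) = β - α := by
    have : x₀ / 2 = (β - α).val + T := by omega
    rw [this]
    push_cast
    rw [ZMod.natCast_self, add_zero]
    exact ZMod.natCast_rightInverse _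
  have hterm : 0 < Kcond T α β x₀ * Real.exp (PhiM T ω lam h α β x₀ - b*x₀) :=
    mul_pos (Kcond_pos hT (by omega) (by omega) hcl) (Real.exp_pos _)
  calc (0:ℝ) < Kcond T α β x₀ * Real.exp (PhiM T ω lam h α β x₀ - b*x₀) := hterm
    _ ≤ _ := Summable.le_tsum (summable_KcondExp hlam hh hb ω α β) x₀
        (fun m _ => mul_nonneg (Kcond_nonneg α β m) (Real.exp_pos _).le)

lemma Amat_nonneg {lam h b : ℝ} (ω : ℕ → ℤ) (α β : ZMod T) :
    0 ≤ Amat T ω b lam h α β := by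
  rw [Amat]
  refine mul_nonneg (pmat_nonneg α β) (tsum_nonneg fun x =>
    mul_nonneg (Kcond_nonneg α β x) (Real.exp_pos _).le)

end Tfacts2

end Copoly
namespace Copoly

section Helpers
variable {T : ℕ} [NeZero T]

lemma summable_slice2 {g : ZMod T × ℕ → ℝ} (hg : Summable g) (β : ZMod T) :
    Summable (fun x : ℕ => g (β, x)) :=
  hg.comp_injective (fun a b hab => by simpa using hab)

lemma tsum_pair {g : ZMod T × ℕ → ℝ} (hg : Summable g) :
    ∑' q : ZMod T × ℕ, g q = ∑ β : ZMod T, ∑' x : ℕ, g (β, x) := by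
  rw [Summable.tsum_prod' hg (fun β => summable_slice2 hg β), tsum_fintype]

lemma summable_pair_of_fibers {g : ZMod T × ℕ → ℝ} (h0 : ∀ q, 0 ≤ g q)
    (hfib : ∀ β, Summable (fun x : ℕ => g (β, x))) : Summable g := by
  rw [summable_prod_of_nonneg (fun q => h0 q)]
  exact ⟨hfib, Summable.of_finite⟩

lemma summable_slice {f : Sp T → ℝ} (hf : Summable f) (α : ZMod T) :
    Summable (fun q : ZMod T × ℕ => f (α, q.1, q.2)) :=
  hf.comp_injective (fun a b hab => by
    simp only [Prod.mk.injEq, true_and] at hab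
    exact Prod.ext hab.1 hab.2)

lemma summable_fiber {f : Sp T → ℝ} (hf : Summable f) (α β : ZMod T) :
    Summable (fun x : ℕ => f (α, β, x)) :=
  hf.comp_injective (fun a b hab => by simpa using hab)

lemma tsum_sp {f : Sp T → ℝ} (hf : Summable f) :
    ∑' p : Sp T, f p = ∑ α : ZMod T, ∑ β : ZMod T, ∑' x : ℕ, f (α, β, x) := by
  rw [Summable.tsum_prod' hf (fun α => summable_slice hf α), tsum_fintype]
  exact Finset.sum_congr rfl (fun α _ => tsum_pair (summable_slice hf α))

lemma summable_sp_of_fibers {f : Sp T → ℝ} (h0 : ∀ p, 0 ≤ f p)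
    (hfib : ∀ α β, Summable (fun x : ℕ => f (α, β, x))) : Summable f := by
  rw [summable_prod_of_nonneg (fun q => h0 q)]
  refine ⟨fun α => summable_pair_of_fibers (fun q => h0 _) (fun β => hfib α β), ?_⟩
  exact Summable.of_finite

lemma marg1_eq_sum {μ : Sp T → ℝ} (hμs : Summable μ) (α : ZMod T) :
    marg1 μ α = ∑ β : ZMod T, ∑' x : ℕ, μ (α, β, x) := by
  rw [marg1]
  exact tsum_pair (summable_slice hμs α)

lemma marg2_eq_sum {μ : Sp T → ℝ} (hμs : Summable μ) (β : ZMod T) :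
    marg2 μ β = ∑ α : ZMod T, ∑' x : ℕ, μ (α, β, x) := by
  rw [marg2]
  refine (tsum_pair ?_).trans ?_
  · exact hμs.comp_injective (fun a b hab => by
      simp only [Prod.mk.injEq] at hab
      exact Prod.ext hab.1 hab.2.2)
  · rfl

lemma marg1_nonneg {μ : Sp T → ℝ} (h0 : ∀ p, 0 ≤ μ p) (α : ZMod T) : 0 ≤ marg1 μ α :=
  tsum_nonneg (fun q => h0 _)

lemma le_marg1 {μ : Sp T → ℝ} (hμs : Summable μ) (h0 : ∀ p, 0 ≤ μ p) (p : Sp T) :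
    μ p ≤ marg1 μ p.1 := by
  rw [marg1]
  have : μ p = (fun q : ZMod T × ℕ => μ (p.1, q.1, q.2)) (p.2.1, p.2.2) := rfl
  rw [this]
  exact Summable.le_tsum (summable_slice hμs p.1) (p.2.1, p.2.2) (fun q _ => h0 _)

lemma sum_marg1 {μ : Sp T → ℝ} (hμs : Summable μ) :
    ∑ α : ZMod T, marg1 μ α = ∑' p : Sp T, μ p := by
  rw [tsum_sp hμs]
  exact Finset.sum_congr rfl (fun α _ => (marg1_eq_sum hμs α))

/-- grouping a sum weighted by a function of the first coordinate -/
lemma tsum_mul_first {μ : Sp T → ℝ} (hμs : Summable μ) (h0 : ∀ p, 0 ≤ μ p) (c : ZMod T → ℝ) :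
    Summable (fun p : Sp T => μ p * c p.1) ∧
      ∑' p : Sp T, μ p * c p.1 = ∑ α : ZMod T, marg1 μ α * c α := by
  have hsummable : Summable (fun p : Sp T => μ p * c p.1) := by
    refine Summable.of_abs ?_
    refine Summable.of_nonneg_of_le (fun p => abs_nonneg _) (fun p => ?_)
      (hμs.mul_right (∑ γ : ZMod T, |c γ|))
    rw [abs_mul, abs_of_nonneg (h0 p)]
    refine mul_le_mul_of_nonneg_left ?_ (h0 p)
    exact Finset.single_le_sum (f := fun γ => |c γ|) (fun γ _ => abs_nonneg _)
      (Finset.mem_univ p.1)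
  refine ⟨hsummable, ?_⟩
  rw [tsum_sp hsummable]
  refine Finset.sum_congr rfl (fun α _ => ?_)
  rw [marg1_eq_sum hμs α, Finset.sum_mul]
  refine Finset.sum_congr rfl (fun β _ => ?_)
  exact tsum_mul_right (f := fun x => μ (α, β, x)) (a := c α)

/-- grouping a sum weighted by a function of the second coordinate -/
lemma tsum_mul_second {μ : Sp T → ℝ} (hμs : Summable μ) (h0 : ∀ p, 0 ≤ μ p) (c : ZMod T → ℝ) :
    Summable (fun p : Sp T => μ p * c p.2.1) ∧
      ∑' p : Sp T, μ p * c p.2.1 = ∑ β : ZMod T, marg2 μ β * c β := by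
  have hsummable : Summable (fun p : Sp T => μ p * c p.2.1) := by
    refine Summable.of_abs ?_
    refine Summable.of_nonneg_of_le (fun p => abs_nonneg _) (fun p => ?_)
      (hμs.mul_right (∑ γ : ZMod T, |c γ|))
    rw [abs_mul, abs_of_nonneg (h0 p)]
    refine mul_le_mul_of_nonneg_left ?_ (h0 p)
    exact Finset.single_le_sum (f := fun γ => |c γ|) (fun γ _ => abs_nonneg _)
      (Finset.mem_univ p.2.1)
  refine ⟨hsummable, ?_⟩
  rw [tsum_sp hsummable]
  rw [Finset.sum_comm]
  refine Finset.sum_congr rfl (fun β _ => ?_)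
  rw [marg2_eq_sum hμs β, Finset.sum_mul]
  refine Finset.sum_congr rfl (fun α _ => ?_)
  exact tsum_mul_right (f := fun x => μ (α, β, x)) (a := c β)

end Helpers

/-! ### klF facts -/

lemma klF_zero_left (c : ℝ) : klF 0 c = c := by simp [klF]

lemma klF_nonneg {a c : ℝ} (ha : 0 ≤ a) (hc : 0 ≤ c) (h : a ≠ 0 → 0 < c) : 0 ≤ klF a c := by
  by_cases ha0 : a = 0
  · simp [klF, ha0, hc]
  · have hcp := h ha0
    have hap : 0 < a := lt_of_le_of_ne ha (Ne.symm ha0)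
    have hlog : Real.log (c / a) ≤ c / a - 1 := Real.log_le_sub_one_of_pos (div_pos hcp hap)
    have key : a * Real.log (c / a) ≤ c - a := by
      have h2 := mul_le_mul_of_nonneg_left hlog hap.le
      have h3 : a * (c / a - 1) = c - a := by field_simp
      linarith [h3 ▸ h2]
    have hrev : Real.log (a / c) = - Real.log (c / a) := by
      rw [Real.log_div ha0 (ne_of_gt hcp), Real.log_div (ne_of_gt hcp) ha0]
      ring
    rw [klF, hrev]
    nlinarith
  
lemma klF_diff {a c1 c2 : ℝ} (h1 : a ≠ 0 → (0 < c1 ∧ 0 < c2)) :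
    klF a c2 - klF a c1 = a * (Real.log c1 - Real.log c2) + c2 - c1 := by
  by_cases ha0 : a = 0
  · simp [klF, ha0]
  · obtain ⟨hc1, hc2⟩ := h1 ha0
    rw [klF, klF, Real.log_div ha0 (ne_of_gt hc2), Real.log_div ha0 (ne_of_gt hc1)]
    ring

lemma klF_expand (a c : ℝ) : klF a c = a * Real.log (a / c) - a + c := rfl

/-! ### ENNReal/EReal conversion -/

lemma tsum_ofReal_ne_top {ι : Type*} {f : ι → ℝ} (hf : ∀ i, 0 ≤ f i)
    (hne : (∑' i, ENNReal.ofReal (f i)) ≠ ⊤) :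
    Summable f ∧ (∑' i, ENNReal.ofReal (f i)) = ENNReal.ofReal (∑' i, f i) := by
  have hsum : Summable (fun i => (f i).toNNReal) :=
    ENNReal.tsum_coe_ne_top_iff_summable.mp hne
  have hsumf : Summable f :=
    (NNReal.summable_coe.mpr hsum).congr (fun i => Real.coe_toNNReal _ (hf i))
  exact ⟨hsumf, (ENNReal.ofReal_tsum_of_nonneg hf hsumf).symm⟩

lemma ofReal_tsum_of_nonneg' {ι : Type*} {f : ι → ℝ} (hf : ∀ i, 0 ≤ f i) (hs : Summable f) :
    (∑' i, ENNReal.ofReal (f i)) = ENNReal.ofReal (∑' i, f i) :=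
  (ENNReal.ofReal_tsum_of_nonneg hf hs).symm

lemma coe_ennreal_ofReal_of_nonneg {x : ℝ} (hx : 0 ≤ x) :
    ((ENNReal.ofReal x : ℝ≥0∞) : EReal) = (x : EReal) := by
  rw [EReal.coe_ennreal_ofReal]
  congr 1
  exact max_eq_left hx

end Copoly
namespace Copoly

lemma Tper_pos {ω : ℕ → ℤ} (hω : memT ω) : 0 < Tper ω := by
  obtain ⟨-, ⟨T0, hT0⟩, -⟩ := hω
  have hmem : Tper ω ∈ {T | IsPeriod ω T} := Nat.sInf_mem ⟨T0, hT0⟩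
  exact hmem.1

section Main
variable {T : ℕ} {ω : ℕ → ℤ} {lam h b : ℝ} {π v : ZMod T → ℝ}

lemma Zeig_pos [NeZero T] (hT : 0 < T) (hlam : 0 ≤ lam) (hh : 0 ≤ h) (hb : 0 ≤ b)
    (hpf : IsPF T ω b lam h π v) : 0 < Zeig T ω b lam h := by
  obtain ⟨hv, heig, -, -, -⟩ := hpf
  haveI : Nonempty (ZMod T) := ⟨0⟩
  have h1 : 0 < ∑' j : ZMod T, Amat T ω b lam h 0 j * v j := by
    rw [tsum_fintype]
    refine Finset.sum_pos (fun j _ => mul_pos (Amat_pos hT hlam hh hb ω 0 j) (hv j)) ?_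
    exact Finset.univ_nonempty
  rw [heig 0] at h1
  nlinarith [hv 0]

lemma pi_pos [NeZero T] (hT : 0 < T) (hlam : 0 ≤ lam) (hh : 0 ≤ h) (hb : 0 ≤ b)
    (hpf : IsPF T ω b lam h π v) : ∀ j, 0 < π j := by
  have hZ := Zeig_pos hT hlam hh hb hpf
  obtain ⟨hv, heig, hπ0, hπ1, hstat⟩ := hpf
  have hex : ∃ i, 0 < π i := by
    by_contra hno
    push_neg at hno
    have hzero : ∀ i, π i = 0 := fun i => le_antisymm (hno i) (hπ0 i)
    rw [tsum_fintype] at hπ1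
    simp [hzero] at hπ1
  obtain ⟨i0, hi0⟩ := hex
  intro j
  have hst := hstat j
  rw [tsum_fintype] at hst
  rw [← hst]
  refine Finset.sum_pos' (fun i _ => mul_nonneg (hπ0 i) ?_) ⟨i0, Finset.mem_univ _, ?_⟩
  · exact div_nonneg (mul_nonneg (Amat_nonneg ω i j) (hv j).le)
      (mul_nonneg hZ.le (hv i).le)
  · exact mul_pos hi0 (div_pos (mul_pos (Amat_pos hT hlam hh hb ω i0 j) (hv j))
      (mul_pos hZ (hv i0)))

lemma muB_fiber_eq (α β : ZMod T) (x : ℕ) :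
    muB T ω b lam h π v (α, β, x)
      = Kcond T α β x * Real.exp (PhiM T ω lam h α β x - b * x) *
          (π α * pmat T α β * v β / (Zeig T ω b lam h * v α)) := by
  rw [muB]
  ring

lemma muB_nonneg [NeZero T] (hT : 0 < T) (hlam : 0 ≤ lam) (hh : 0 ≤ h) (hb : 0 ≤ b)
    (hpf : IsPF T ω b lam h π v) (p : Sp T) : 0 ≤ muB T ω b lam h π v p := by
  have hZ := Zeig_pos hT hlam hh hb hpf
  rw [muB]
  have := hpf.2.2.1 p.1
  have := hpf.1 p.1
  have := hpf.1 p.2.1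
  have := pmat_nonneg (T := T) p.1 p.2.1
  have := Kcond_nonneg (T := T) p.1 p.2.1 p.2.2
  have := (Real.exp_pos (PhiM T ω lam h p.1 p.2.1 p.2.2 - b * p.2.2)).le
  positivity

lemma summable_muB_fiber (hlam : 0 ≤ lam) (hh : 0 ≤ h) (hb : 0 ≤ b) (α β : ZMod T) :
    Summable (fun x : ℕ => muB T ω b lam h π v (α, β, x)) := by
  refine ((summable_KcondExp hlam hh hb ω α β).mul_right
    (π α * pmat T α β * v β / (Zeig T ω b lam h * v α))).congr (fun x => ?_)
  rw [muB_fiber_eq]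

lemma tsum_muB_fiber (hlam : 0 ≤ lam) (hh : 0 ≤ h) (hb : 0 ≤ b) (α β : ZMod T) :
    ∑' x : ℕ, muB T ω b lam h π v (α, β, x)
      = π α * (Amat T ω b lam h α β * v β) / (Zeig T ω b lam h * v α) := by
  calc ∑' x : ℕ, muB T ω b lam h π v (α, β, x)
      = ∑' x : ℕ, Kcond T α β x * Real.exp (PhiM T ω lam h α β x - b * x) *
          (π α * pmat T α β * v β / (Zeig T ω b lam h * v α)) :=
        tsum_congr (fun x => muB_fiber_eq α β x)
    _ = (∑' x : ℕ, Kcond T α β x * Real.exp (PhiM T ω lam h α β x - b * x)) *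
          (π α * pmat T α β * v β / (Zeig T ω b lam h * v α)) := tsum_mul_right
    _ = π α * (Amat T ω b lam h α β * v β) / (Zeig T ω b lam h * v α) := by
        rw [Amat]
        ring

lemma summable_muB [NeZero T] (hT : 0 < T) (hlam : 0 ≤ lam) (hh : 0 ≤ h) (hb : 0 ≤ b)
    (hpf : IsPF T ω b lam h π v) : Summable (muB T ω b lam h π v) :=
  summable_sp_of_fibers (muB_nonneg hT hlam hh hb hpf)
    (fun α β => summable_muB_fiber hlam hh hb α β)

lemma marg1_muB [NeZero T] (hT : 0 < T) (hlam : 0 ≤ lam) (hh : 0 ≤ h) (hb : 0 ≤ b)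
    (hpf : IsPF T ω b lam h π v) (α : ZMod T) :
    marg1 (muB T ω b lam h π v) α = π α := by
  have hZ := Zeig_pos hT hlam hh hb hpf
  have hv := hpf.1
  rw [marg1_eq_sum (summable_muB hT hlam hh hb hpf) α]
  have heig := hpf.2.1 α
  rw [tsum_fintype] at heig
  calc ∑ β : ZMod T, ∑' x : ℕ, muB T ω b lam h π v (α, β, x)
      = ∑ β : ZMod T, π α * (Amat T ω b lam h α β * v β) / (Zeig T ω b lam h * v α) :=
        Finset.sum_congr rfl (fun β _ => tsum_muB_fiber hlam hh hb α β)
    _ = π α * (∑ β : ZMod T, Amat T ω b lam h α β * v β) / (Zeig T ω b lam h * v α) := by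
        rw [Finset.mul_sum, Finset.sum_div]
    _ = π α * (Zeig T ω b lam h * v α) / (Zeig T ω b lam h * v α) := by rw [heig]
    _ = π α := by
        have hzv : Zeig T ω b lam h * v α ≠ 0 := ne_of_gt (mul_pos hZ (hv α))
        rw [mul_div_assoc, div_self hzv, mul_one]

lemma tsum_muB_eq_one [NeZero T] (hT : 0 < T) (hlam : 0 ≤ lam) (hh : 0 ≤ h) (hb : 0 ≤ b)
    (hpf : IsPF T ω b lam h π v) : ∑' p : Sp T, muB T ω b lam h π v p = 1 := by
  rw [← sum_marg1 (summable_muB hT hlam hh hb hpf)]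
  have hπ1 := hpf.2.2.2.1
  rw [tsum_fintype] at hπ1
  rw [← hπ1]
  exact Finset.sum_congr rfl (fun α _ => marg1_muB hT hlam hh hb hpf α)

end Main

end Copoly
namespace Copoly

/-- the reference measure `μ(α) p_{α,β} K_{α,β}(x)` appearing in `I(μ)` -/
def refM (T : ℕ) (μ : Sp T → ℝ) (p : Sp T) : ℝ :=
  marg1 μ p.1 * pmat T p.1 p.2.1 * Kcond T p.1 p.2.1 p.2.2

/-- the pointwise correction term -/
def gfun (T : ℕ) (ω : ℕ → ℤ) (lam h b : ℝ) (π v : ZMod T → ℝ) (μ : Sp T → ℝ)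
    (p : Sp T) : ℝ :=
  μ p * (Real.log (marg1 μ p.1) - Real.log (π p.1) + Real.log (v p.1) - Real.log (v p.2.1)
      - PhiM T ω lam h p.1 p.2.1 p.2.2 + b * p.2.2 + Real.log (Zeig T ω b lam h))
    + muB T ω b lam h π v p - refM T μ p

section Main2
variable {T : ℕ} {ω : ℕ → ℤ} {lam h b : ℝ} {π v : ZMod T → ℝ} {μ : Sp T → ℝ}

lemma refM_nonneg [NeZero T] (hμ0 : ∀ p, 0 ≤ μ p) (p : Sp T) : 0 ≤ refM T μ p :=
  mul_nonneg (mul_nonneg (marg1_nonneg hμ0 p.1) (pmat_nonneg _ _)) (Kcond_nonneg _ _ _)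

lemma summable_refM_fiber (α β : ZMod T) :
    Summable (fun x : ℕ => refM T μ (α, β, x)) :=
  (summable_Kcond α β).mul_left (marg1 μ α * pmat T α β)

lemma tsum_refM_fiber (hT : 0 < T) (α β : ZMod T) :
    ∑' x : ℕ, refM T μ (α, β, x) = marg1 μ α * pmat T α β := by
  calc ∑' x : ℕ, refM T μ (α, β, x)
      = ∑' x : ℕ, (marg1 μ α * pmat T α β) * Kcond T α β x := tsum_congr (fun x => rfl)
    _ = (marg1 μ α * pmat T α β) * ∑' x : ℕ, Kcond T α β x := tsum_mul_left
    _ = marg1 μ α * pmat T α β := by rw [tsum_Kcond hT, mul_one]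

lemma summable_refM [NeZero T] (hμ0 : ∀ p, 0 ≤ μ p) : Summable (refM T μ) :=
  summable_sp_of_fibers (refM_nonneg hμ0) (fun α β => summable_refM_fiber α β)

lemma tsum_refM [NeZero T] (hT : 0 < T) (hμ0 : ∀ p, 0 ≤ μ p) (hμs : Summable μ)
    (hμt : ∑' p : Sp T, μ p = 1) : ∑' p : Sp T, refM T μ p = 1 := by
  rw [tsum_sp (summable_refM hμ0)]
  calc ∑ α : ZMod T, ∑ β : ZMod T, ∑' x : ℕ, refM T μ (α, β, x)
      = ∑ α : ZMod T, ∑ β : ZMod T, marg1 μ α * pmat T α β :=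
        Finset.sum_congr rfl (fun α _ => Finset.sum_congr rfl
          (fun β _ => tsum_refM_fiber hT α β))
    _ = ∑ α : ZMod T, marg1 μ α * ∑ β : ZMod T, pmat T α β := by
        refine Finset.sum_congr rfl (fun α _ => ?_)
        rw [Finset.mul_sum]
    _ = ∑ α : ZMod T, marg1 μ α := by
        refine Finset.sum_congr rfl (fun α _ => ?_)
        rw [pmat_rowsum, mul_one]
    _ = 1 := by rw [sum_marg1 hμs, hμt]

lemma klF_muB_expand [NeZero T] (hZ : 0 < Zeig T ω b lam h) (hv : ∀ i, 0 < v i) (hπ : ∀ i, 0 < π i)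
    (p : Sp T)
    (hP : μ p ≠ 0 → 0 < marg1 μ p.1 ∧ 0 < pmat T p.1 p.2.1 ∧ 0 < Kcond T p.1 p.2.1 p.2.2) :
    klF (μ p) (muB T ω b lam h π v p)
      = klF (μ p) (refM T μ p) + gfun T ω lam h b π v μ p := by
  by_cases hp : μ p = 0
  · rw [gfun, hp, klF_zero_left, klF_zero_left]
    ring
  · obtain ⟨hm, hpm, hK⟩ := hP hp
    obtain ⟨α, β, x⟩ := p
    have hπα := hπ α
    have hvα := hv α
    have hvβ := hv β
    have hexp := Real.exp_pos (PhiM T ω lam h α β x - b * x)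
    have hmuBpos : 0 < muB T ω b lam h π v (α, β, x) := by
      rw [muB]
      positivity
    have hrefpos : 0 < refM T μ (α, β, x) := mul_pos (mul_pos hm hpm) hK
    have hdiff := klF_diff (a := μ (α, β, x)) (c1 := refM T μ (α, β, x))
      (c2 := muB T ω b lam h π v (α, β, x)) (fun _ => ⟨hrefpos, hmuBpos⟩)
    have hlogref : Real.log (refM T μ (α, β, x))
        = Real.log (marg1 μ α) + Real.log (pmat T α β) + Real.log (Kcond T α β x) := by
      rw [refM, Real.log_mul (by positivity) (ne_of_gt hK),
        Real.log_mul (ne_of_gt hm) (ne_of_gt hpm)]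
    have hlogmuB : Real.log (muB T ω b lam h π v (α, β, x))
        = Real.log (π α) + Real.log (pmat T α β) + Real.log (Kcond T α β x)
          + (PhiM T ω lam h α β x - b * x) + Real.log (v β)
          - (Real.log (Zeig T ω b lam h) + Real.log (v α)) := by
      rw [muB]
      rw [Real.log_div (by positivity) (by positivity)]
      rw [Real.log_mul (by positivity) (ne_of_gt hvβ)]
      rw [Real.log_mul (by positivity) (ne_of_gt hexp)]
      rw [Real.log_mul (by positivity) (ne_of_gt hK)]
      rw [Real.log_mul (ne_of_gt hπα) (ne_of_gt hpm)]
      rw [Real.log_mul (ne_of_gt hZ) (ne_of_gt hvα)]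
      rw [Real.log_exp]
    have hbr : Real.log (refM T μ (α, β, x)) - Real.log (muB T ω b lam h π v (α, β, x))
        = Real.log (marg1 μ α) - Real.log (π α) + Real.log (v α) - Real.log (v β)
          - PhiM T ω lam h α β x + b * x + Real.log (Zeig T ω b lam h) := by
      rw [hlogref, hlogmuB]
      ring
    rw [gfun]
    have : klF (μ (α, β, x)) (muB T ω b lam h π v (α, β, x))
        = klF (μ (α, β, x)) (refM T μ (α, β, x))
          + (μ (α, β, x) * (Real.log (refM T μ (α, β, x))
              - Real.log (muB T ω b lam h π v (α, β, x)))
            + muB T ω b lam h π v (α, β, x) - refM T μ (α, β, x)) := by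
      linarith [hdiff]
    rw [this, hbr]

lemma xi_abs_le [NeZero T] (α β : ZMod T) :
    |((xiM T ω α β : ℤ) : ℝ)|
      ≤ ∑ γ : ZMod T, ∑ δ : ZMod T, |((xiM T ω γ δ : ℤ) : ℝ)| := by
  calc |((xiM T ω α β : ℤ) : ℝ)| ≤ ∑ δ : ZMod T, |((xiM T ω α δ : ℤ) : ℝ)| :=
        Finset.single_le_sum (f := fun δ => |((xiM T ω α δ : ℤ) : ℝ)|)
          (fun δ _ => abs_nonneg _) (Finset.mem_univ β)
    _ ≤ ∑ γ : ZMod T, ∑ δ : ZMod T, |((xiM T ω γ δ : ℤ) : ℝ)| :=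
        Finset.single_le_sum (f := fun γ => ∑ δ : ZMod T, |((xiM T ω γ δ : ℤ) : ℝ)|)
          (fun γ _ => Finset.sum_nonneg (fun δ _ => abs_nonneg _)) (Finset.mem_univ α)

lemma summable_PhiMul [NeZero T] (hlam : 0 ≤ lam) (hh : 0 ≤ h)
    (hμ0 : ∀ p, 0 ≤ μ p) (hμs : Summable μ)
    (hsum : Summable fun p : Sp T => (p.2.2 : ℝ) * μ p) :
    Summable (fun p : Sp T => PhiM T ω lam h p.1 p.2.1 p.2.2 * μ p) := by
  set C : ℝ := Real.log 2 + 2 * lam * (∑ γ : ZMod T, ∑ δ : ZMod T, |((xiM T ω γ δ : ℤ) : ℝ)|)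
    with hC
  refine Summable.of_abs (Summable.of_nonneg_of_le (fun p => abs_nonneg _) (fun p => ?_)
    ((hμs.mul_left C).add (hsum.mul_left (2 * lam * h))))
  rw [abs_mul, abs_of_nonneg (hμ0 p)]
  have h1 : |PhiM T ω lam h p.1 p.2.1 p.2.2| ≤ C + 2 * lam * h * p.2.2 := by
    refine (abs_PhiM_le hlam hh ω p.1 p.2.1 p.2.2).trans ?_
    have h2 := xi_abs_le (ω := ω) p.1 p.2.1
    rw [hC]
    nlinarith [h2, hlam]
  calc |PhiM T ω lam h p.1 p.2.1 p.2.2| * μ p ≤ (C + 2 * lam * h * p.2.2) * μ p :=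
        mul_le_mul_of_nonneg_right h1 (hμ0 p)
    _ = C * μ p + 2 * lam * h * ((p.2.2 : ℝ) * μ p) := by ring

end Main2

end Copoly
namespace Copoly

section Final
variable {T : ℕ} {ω : ℕ → ℤ} {lam h b : ℝ} {π v : ZMod T → ℝ}

theorem main_identity [NeZero T] (hT : 0 < T) (hlam : 0 ≤ lam) (hh : 0 ≤ h) (hb : 0 < b)
    (hpf : IsPF T ω b lam h π v) (μ : Sp T → ℝ) (hμ : memP μ)
    (hsum : Summable fun p : Sp T => (p.2.2 : ℝ) * μ p)
    (hI : Ifun T μ ≠ ⊤) :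
    Qfun T ω lam h μ =
      ((b * (∑' p : Sp T, (p.2.2 : ℝ) * μ p) + Real.log (Zeig T ω b lam h) : ℝ) : EReal) -
        Htil μ (muB T ω b lam h π v) := by
  obtain ⟨hμ0, hμhs, hμsupp, hμmarg⟩ := hμ
  have hμs : Summable μ := hμhs.summable
  have hμt : ∑' p : Sp T, μ p = 1 := hμhs.tsum_eq
  have hb0 : 0 ≤ b := hb.le
  have hZ : 0 < Zeig T ω b lam h := Zeig_pos hT hlam hh hb0 hpf
  have hv : ∀ i, 0 < v i := hpf.1
  have hπ : ∀ i, 0 < π i := pi_pos hT hlam hh hb0 hpf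
  have hP : ∀ p : Sp T, μ p ≠ 0 →
      0 < marg1 μ p.1 ∧ 0 < pmat T p.1 p.2.1 ∧ 0 < Kcond T p.1 p.2.1 p.2.2 := by
    intro p hp
    obtain ⟨he, h2, hcl⟩ := hμsupp p hp
    have h1 : 0 < μ p := lt_of_le_of_ne (hμ0 p) (Ne.symm hp)
    exact ⟨lt_of_lt_of_le h1 (le_marg1 hμs hμ0 p), pmat_pos hT _ _, Kcond_pos hT he h2 hcl⟩
  -- the I functional
  have hklI_nonneg : ∀ p : Sp T, 0 ≤ klF (μ p) (refM T μ p) := fun p =>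
    klF_nonneg (hμ0 p) (refM_nonneg hμ0 p) (fun hp =>
      mul_pos (mul_pos (hP p hp).1 (hP p hp).2.1) (hP p hp).2.2)
  have hIfun_eq : Ifun T μ = ∑' p : Sp T, ENNReal.ofReal (klF (μ p) (refM T μ p)) := rfl
  have hIfin : (∑' p : Sp T, ENNReal.ofReal (klF (μ p) (refM T μ p))) ≠ ⊤ := by
    rw [← hIfun_eq]; exact hI
  obtain ⟨hklIs, hIval⟩ := tsum_ofReal_ne_top hklI_nonneg hIfin
  -- muB positivity on the support
  have hνpos : ∀ p : Sp T, μ p ≠ 0 → 0 < muB T ω b lam h π v p := by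
    intro p hp
    obtain ⟨hm, hpm, hK⟩ := hP p hp
    have h1 := hπ p.1
    have h2 := hv p.1
    have h3 := hv p.2.1
    have h4 := Real.exp_pos (PhiM T ω lam h p.1 p.2.1 p.2.2 - b * p.2.2)
    rw [muB]
    positivity
  have hexpand : ∀ p : Sp T, klF (μ p) (muB T ω b lam h π v p)
      = klF (μ p) (refM T μ p) + gfun T ω lam h b π v μ p :=
    fun p => klF_muB_expand hZ hv hπ p (hP p)
  -- summability of the pieces of gfun
  have hA1 := tsum_mul_first hμs hμ0
    (fun α => Real.log (marg1 μ α) - Real.log (π α) + Real.log (v α))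
  have hA2 := tsum_mul_second hμs hμ0 (fun β => - Real.log (v β))
  have hPhiS : Summable (fun p : Sp T => PhiM T ω lam h p.1 p.2.1 p.2.2 * μ p) :=
    summable_PhiMul hlam hh hμ0 hμs hsum
  have hA31s : Summable (fun p : Sp T => b * ((p.2.2 : ℝ) * μ p)) := hsum.mul_left b
  have hA32s : Summable (fun p : Sp T => Real.log (Zeig T ω b lam h) * μ p) := hμs.mul_left _
  have hνs : Summable (muB T ω b lam h π v) := summable_muB hT hlam hh hb0 hpf
  have hrs : Summable (refM T μ) := summable_refM hμ0
  have h12s : Summable (fun p : Sp T =>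
      μ p * (Real.log (marg1 μ p.1) - Real.log (π p.1) + Real.log (v p.1))
        + μ p * (- Real.log (v p.2.1))) := hA1.1.add hA2.1
  have h123s : Summable (fun p : Sp T =>
      (μ p * (Real.log (marg1 μ p.1) - Real.log (π p.1) + Real.log (v p.1))
        + μ p * (- Real.log (v p.2.1))) + b * ((p.2.2 : ℝ) * μ p)) := h12s.add hA31s
  have h1234s : Summable (fun p : Sp T =>
      ((μ p * (Real.log (marg1 μ p.1) - Real.log (π p.1) + Real.log (v p.1))
        + μ p * (- Real.log (v p.2.1))) + b * ((p.2.2 : ℝ) * μ p))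
        + Real.log (Zeig T ω b lam h) * μ p) := h123s.add hA32s
  have h12345s : Summable (fun p : Sp T =>
      (((μ p * (Real.log (marg1 μ p.1) - Real.log (π p.1) + Real.log (v p.1))
        + μ p * (- Real.log (v p.2.1))) + b * ((p.2.2 : ℝ) * μ p))
        + Real.log (Zeig T ω b lam h) * μ p)
        - PhiM T ω lam h p.1 p.2.1 p.2.2 * μ p) := h1234s.sub hPhiS
  have hνrs : Summable (fun p : Sp T => muB T ω b lam h π v p - refM T μ p) := hνs.sub hrs
  have hgdecomp : gfun T ω lam h b π v μ = fun p : Sp T =>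
      ((((μ p * (Real.log (marg1 μ p.1) - Real.log (π p.1) + Real.log (v p.1))
        + μ p * (- Real.log (v p.2.1))) + b * ((p.2.2 : ℝ) * μ p))
        + Real.log (Zeig T ω b lam h) * μ p)
        - PhiM T ω lam h p.1 p.2.1 p.2.2 * μ p)
        + (muB T ω b lam h π v p - refM T μ p) := by
    funext p
    rw [gfun]
    ring
  have hgs : Summable (gfun T ω lam h b π v μ) := by
    rw [hgdecomp]
    exact h12345s.add hνrs
  have hG : ∑' p : Sp T, gfun T ω lam h b π v μ p
      = ((∑ α : ZMod T, marg1 μ α *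
            (Real.log (marg1 μ α) - Real.log (π α) + Real.log (v α)))
          + (∑ β : ZMod T, marg2 μ β * (- Real.log (v β)))
          + b * (∑' p : Sp T, (p.2.2 : ℝ) * μ p)
          + Real.log (Zeig T ω b lam h)
          - (∑' p : Sp T, PhiM T ω lam h p.1 p.2.1 p.2.2 * μ p))
          + (1 - 1) := by
    rw [hgdecomp]
    rw [Summable.tsum_add h12345s hνrs, Summable.tsum_sub h1234s hPhiS, Summable.tsum_add h123s hA32s,
      Summable.tsum_add h12s hA31s, Summable.tsum_add hA1.1 hA2.1, Summable.tsum_sub hνs hrs]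
    rw [hA1.2, hA2.2, tsum_mul_left, tsum_mul_left, hμt, mul_one,
      tsum_muB_eq_one hT hlam hh hb0 hpf, tsum_refM hT hμ0 hμs hμt]
  -- combining the finite-sum pieces
  have hS1 : (∑ α : ZMod T, marg1 μ α *
        (Real.log (marg1 μ α) - Real.log (π α) + Real.log (v α)))
      + (∑ β : ZMod T, marg2 μ β * (- Real.log (v β)))
      = ∑ α : ZMod T, marg1 μ α * (Real.log (marg1 μ α) - Real.log (π α)) := by
    rw [← Finset.sum_add_distrib]
    refine Finset.sum_congr rfl (fun α _ => ?_)
    rw [← hμmarg α]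
    ring
  -- the marginal relative entropy term
  have hMk : (∑' α : ZMod T, klF (marg1 μ α) (marg1 (muB T ω b lam h π v) α))
      = ∑ α : ZMod T, marg1 μ α * (Real.log (marg1 μ α) - Real.log (π α)) := by
    rw [tsum_fintype]
    have hπ1 : ∑ α : ZMod T, π α = 1 := by
      rw [← tsum_fintype (L := SummationFilter.unconditional (ZMod T))]; exact hpf.2.2.2.1
    have hm1 : ∑ α : ZMod T, marg1 μ α = 1 := by rw [sum_marg1 hμs, hμt]
    calc ∑ α : ZMod T, klF (marg1 μ α) (marg1 (muB T ω b lam h π v) α)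
        = ∑ α : ZMod T, (marg1 μ α * (Real.log (marg1 μ α) - Real.log (π α))
            - marg1 μ α + π α) := by
          refine Finset.sum_congr rfl (fun α _ => ?_)
          rw [marg1_muB hT hlam hh hb0 hpf α, klF_expand]
          by_cases hmα : marg1 μ α = 0
          · simp [hmα]
          · rw [Real.log_div hmα (ne_of_gt (hπ α))]
      _ = ∑ α : ZMod T, marg1 μ α * (Real.log (marg1 μ α) - Real.log (π α)) := by
          rw [Finset.sum_add_distrib, Finset.sum_sub_distrib, hm1, hπ1]
          ring
  -- the Dkl term
  have hklD_nonneg : ∀ p : Sp T, 0 ≤ klF (μ p) (muB T ω b lam h π v p) := fun p =>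
    klF_nonneg (hμ0 p) (muB_nonneg hT hlam hh hb0 hpf p) (hνpos p)
  have hklDs : Summable (fun p : Sp T => klF (μ p) (muB T ω b lam h π v p)) :=
    (hklIs.add hgs).congr (fun p => (hexpand p).symm)
  have hDval : Dkl μ (muB T ω b lam h π v)
      = ENNReal.ofReal ((∑' p : Sp T, klF (μ p) (refM T μ p))
          + ∑' p : Sp T, gfun T ω lam h b π v μ p) := by
    calc Dkl μ (muB T ω b lam h π v)
        = ∑' p : Sp T, ENNReal.ofReal (klF (μ p) (muB T ω b lam h π v p)) := rfl
      _ = ENNReal.ofReal (∑' p : Sp T, klF (μ p) (muB T ω b lam h π v p)) :=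
          ofReal_tsum_of_nonneg' hklD_nonneg hklDs
      _ = ENNReal.ofReal ((∑' p : Sp T, klF (μ p) (refM T μ p))
            + ∑' p : Sp T, gfun T ω lam h b π v μ p) := by
          rw [tsum_congr hexpand, Summable.tsum_add hklIs hgs]
  have hIR0 : 0 ≤ ∑' p : Sp T, klF (μ p) (refM T μ p) := tsum_nonneg hklI_nonneg
  have hDR0 : 0 ≤ (∑' p : Sp T, klF (μ p) (refM T μ p))
      + ∑' p : Sp T, gfun T ω lam h b π v μ p := by
    rw [← Summable.tsum_add hklIs hgs, ← tsum_congr hexpand]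
    exact tsum_nonneg hklD_nonneg
  -- assembling everything in EReal
  rw [Qfun, Htil, hIfun_eq, hIval, hDval, hMk,
    coe_ennreal_ofReal_of_nonneg hIR0, coe_ennreal_ofReal_of_nonneg hDR0,
    ← EReal.coe_sub, ← EReal.coe_sub, ← EReal.coe_sub]
  rw [EReal.coe_eq_coe_iff]
  linarith [hG, hS1]

end Final

end Copoly
namespace Copoly

/-- equation (2.10): for `μ ∈ 𝒫` with finite mean and `I(μ) < ∞`,
`Q(μ) = b ∑_x x μ(x) + log Z(b,λ,h) - H̃(μ | μ_b^{λ,h})`. -/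
theorem stmt11 (ω : ℕ → ℤ) (hω : memT ω) (lam h : ℝ) (hlam : 0 ≤ lam) (hh : 0 ≤ h)
    (b : ℝ) (hb : 0 < b) (π v : ZMod (Tper ω) → ℝ)
    (hpf : IsPF (Tper ω) ω b lam h π v)
    (μ : Sp (Tper ω) → ℝ) (hμ : memP μ)
    (hsum : Summable fun p : Sp (Tper ω) => (p.2.2 : ℝ) * μ p)
    (hI : Ifun (Tper ω) μ ≠ ⊤) :
    Qfun (Tper ω) ω lam h μ =
      ((b * (∑' p : Sp (Tper ω), (p.2.2 : ℝ) * μ p) +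
          Real.log (Zeig (Tper ω) ω b lam h) : ℝ) : EReal) -
        Htil μ (muB (Tper ω) ω b lam h π v) := by
  have hT : 0 < Tper ω := Tper_pos hω
  haveI : NeZero (Tper ω) := ⟨by omega⟩
  exact main_identity hT hlam hh hb hpf μ hμ hsum hI

end Copoly
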